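/- arXiv:1706.04334 — 5 statements merged into one kernel-verified Lean document; each statement's English description precedes it below -/
import Mathlib

section
/- Let G be a graph, r a positive integer, and H a subgraph of G such that G - E(H) has at least 2r isolated vertices and pn(H) ≤ r. If the graph G - E(H) (after deleting isolated vertices) has n' non-isolated vertices and pn(G - E(H)) ≤ floor(n'/2), then pn(G) ≤ floor(n/2) where n is the number of non-isolated vertices of G. -/
/-- A path decomposition of `G`: a list of paths of `G` whose edge sets are pairwise
disjoint and whose union is the edge set of `G`. -/
def IsPathDecomp {V : Type} (G : SimpleGraph V)
    (P : List (Σ u : V, Σ v : V, G.Walk u v)) : Prop :=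
  (∀ p ∈ P, p.2.2.IsPath) ∧
  (∀ e : Sym2 V, e ∈ G.edgeSet ↔ ∃ p ∈ P, e ∈ p.2.2.edges) ∧
  P.Pairwise (fun p q => ∀ e, e ∈ p.2.2.edges → e ∉ q.2.2.edges)

/-- Transfer a path decomposition element along a subgraph relation. -/
def transferElem {V : Type} {A G : SimpleGraph V} (h : A ≤ G)
    (p : Σ u : V, Σ v : V, A.Walk u v) : Σ u : V, Σ v : V, G.Walk u v :=
  ⟨p.1, p.2.1, p.2.2.transfer G (fun e he =>
    (SimpleGraph.edgeSet_subset_edgeSet.mpr h) (p.2.2.edges_subset_edgeSet he))⟩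

@[simp] lemma transferElem_edges {V : Type} {A G : SimpleGraph V} (h : A ≤ G)
    (p : Σ u : V, Σ v : V, A.Walk u v) :
    (transferElem h p).2.2.edges = p.2.2.edges := by
  simp [transferElem]

/-- If `H` is an `r`-reducing subgraph of `G` and `G - E(H)` is a Gallai graph,
then `G` is a Gallai graph. -/
theorem reducing_subgraph_lemma {V : Type} [Fintype V] (G H : SimpleGraph V)
    (r : ℕ) (hr : 0 < r) (hHG : H ≤ G)
    (hiso : 2 * r ≤ (G.support \ (G \ H).support).ncard)
    (hpnH : ∃ P, IsPathDecomp H P ∧ P.length ≤ r)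
    (hpnG' : ∃ P, IsPathDecomp (G \ H) P ∧ P.length ≤ (G \ H).support.ncard / 2) :
    ∃ P, IsPathDecomp G P ∧ P.length ≤ G.support.ncard / 2 := by
  obtain ⟨PH, ⟨hHpath, hHedge, hHdisj⟩, hHlen⟩ := hpnH
  obtain ⟨PG, ⟨hGpath, hGedge, hGdisj⟩, hGlen⟩ := hpnG'
  have hG'le : G \ H ≤ G := sdiff_le
  refine ⟨PH.map (transferElem hHG) ++ PG.map (transferElem hG'le), ⟨?_, ?_, ?_⟩, ?_⟩
  · intro p hp
    rcases List.mem_append.mp hp with h | h <;>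
      obtain ⟨q, hq, rfl⟩ := List.mem_map.mp h
    · exact (hHpath q hq).transfer _
    · exact (hGpath q hq).transfer _
  · intro e
    have hsplit : e ∈ G.edgeSet ↔ e ∈ H.edgeSet ∨ e ∈ (G \ H).edgeSet := by
      rw [SimpleGraph.edgeSet_sdiff]
      constructor
      · intro h
        by_cases hH : e ∈ H.edgeSet
        · exact Or.inl hH
        · exact Or.inr ⟨h, hH⟩
      · rintro (h | ⟨h, _⟩)
        · exact SimpleGraph.edgeSet_subset_edgeSet.mpr hHG h
        · exact h
    rw [hsplit, hHedge, hGedge]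
    constructor
    · rintro (⟨p, hp, he⟩ | ⟨p, hp, he⟩)
      · exact ⟨transferElem hHG p, List.mem_append_left _ (List.mem_map_of_mem (f := transferElem hHG) hp),
          by simpa using he⟩
      · exact ⟨transferElem hG'le p, List.mem_append_right _ (List.mem_map_of_mem (f := transferElem hG'le) hp),
          by simpa using he⟩
    · rintro ⟨p, hp, he⟩
      rcases List.mem_append.mp hp with h | h <;>
        obtain ⟨q, hq, rfl⟩ := List.mem_map.mp h
      · exact Or.inl ⟨q, hq, by simpa using he⟩
      · exact Or.inr ⟨q, hq, by simpa using he⟩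
  · rw [List.pairwise_append]
    refine ⟨?_, ?_, ?_⟩
    · rw [List.pairwise_map]
      refine hHdisj.imp ?_
      intro p q h e
      simpa using h e
    · rw [List.pairwise_map]
      refine hGdisj.imp ?_
      intro p q h e
      simpa using h e
    · intro p hp q hq e hep heq
      obtain ⟨p', hp', rfl⟩ := List.mem_map.mp hp
      obtain ⟨q', hq', rfl⟩ := List.mem_map.mp hq
      simp only [transferElem_edges] at hep heq
      have h1 : e ∈ H.edgeSet := p'.2.2.edges_subset_edgeSet hep
      have h2 : e ∈ (G \ H).edgeSet := q'.2.2.edges_subset_edgeSet heq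
      rw [SimpleGraph.edgeSet_sdiff] at h2
      exact h2.2 h1
  · have hsub : (G \ H).support ⊆ G.support := SimpleGraph.support_mono hG'le
    have hcard : (G.support \ (G \ H).support).ncard + (G \ H).support.ncard
        = G.support.ncard :=
      Set.ncard_diff_add_ncard_of_subset hsub (Set.toFinite _)
    simp only [List.length_append, List.length_map]
    omega
end

section
/- Let G be a connected graph decomposed into a path P and a cycle C such that P contains at most one chord of C. Then G admits a decomposition into two paths P_1 and P_2 such that P_1 contains exactly one edge of C. -/
open SimpleGraph

namespace DecompAux

variable {V : Type} {G : SimpleGraph V}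

open SimpleGraph.Walk

lemma tail_nodup {α : Type*} {l : List α} (h : l.Nodup) : l.tail.Nodup := by
  cases l with
  | nil => simp
  | cons a l => exact (List.nodup_cons.mp h).2

lemma isPath_decomp {u t v : V} {X : G.Walk u t} {Y : G.Walk t v}
    (h : (X.append Y).IsPath) :
    X.IsPath ∧ Y.IsPath ∧ ∀ z ∈ X.support, z ∈ Y.support → z = t := by
  have hs := h.support_nodup
  rw [support_append] at hs
  obtain ⟨h1, h2, h3⟩ := List.nodup_append'.mp hs
  have htY : t ∉ Y.support.tail := h3 (X.end_mem_support)
  refine ⟨IsPath.mk' h1, IsPath.mk' ?_, ?_⟩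
  · rw [support_eq_cons]
    exact List.nodup_cons.mpr ⟨htY, h2⟩
  · intro z hzX hzY
    rcases (by rw [support_eq_cons] at hzY; exact List.mem_cons.mp hzY) with h' | h'
    · exact h'
    · exact absurd h' (h3 hzX)

lemma constructionI {u v t c : V} (A : G.Walk u t) (B : G.Walk t v)
    (hP : (A.append B).IsPath)
    (hadj : G.Adj t c) (Q : G.Walk c t) (hQp : Q.IsPath)
    (hnd : (s(t,c) :: Q.edges).Nodup)
    (hdisjE : ∀ e ∈ A.edges ++ B.edges, e ∉ s(t,c) :: Q.edges)
    (hBQ : ∀ z ∈ B.support, z ∈ Q.support → z = t)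
    (hc : c ∉ A.support)
    (L : List (Sym2 V)) (hL : ∀ e, e ∈ L ↔ e ∈ s(t,c) :: Q.edges) :
    ∃ (u₁ v₁ u₂ v₂ : V) (P₁ : G.Walk u₁ v₁) (P₂ : G.Walk u₂ v₂),
      P₁.IsPath ∧ P₂.IsPath ∧
      (∀ e ∈ P₁.edges, e ∉ P₂.edges) ∧
      (∀ e, (e ∈ A.edges ++ B.edges ∨ e ∈ s(t,c) :: Q.edges) ↔ (e ∈ P₁.edges ∨ e ∈ P₂.edges)) ∧
      {e | e ∈ P₁.edges ∧ e ∈ L}.ncard = 1 := by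
  obtain ⟨hA, hB, hAB⟩ := isPath_decomp hP
  set P₁ : G.Walk u c := A.append (Walk.cons hadj Walk.nil) with hP₁
  set P₂ : G.Walk v c := B.reverse.append Q.reverse with hP₂
  have hP₁e : P₁.edges = A.edges ++ [s(t,c)] := by simp [hP₁, edges_append]
  have hP₂e : P₂.edges = B.edges.reverse ++ Q.edges.reverse := by
    simp [hP₂, edges_append, edges_reverse]
  have hPnd := hP.isTrail.edges_nodup
  rw [edges_append] at hPnd
  obtain ⟨hAnd, hBnd, hABdisj⟩ := List.nodup_append'.mp hPnd
  have htcQ : s(t,c) ∉ Q.edges := (List.nodup_cons.mp hnd).1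
  have h1 : P₁.IsPath := by
    apply IsPath.mk'
    have hsup : P₁.support = A.support ++ [c] := by simp [hP₁, support_append]
    rw [hsup, List.nodup_append']
    refine ⟨hA.support_nodup, List.nodup_singleton c, ?_⟩
    intro z hz hz2
    rw [List.mem_singleton] at hz2; subst hz2; exact hc hz
  have htQtail : t ∉ Q.reverse.support.tail := by
    have hh := hQp.reverse.support_nodup
    rw [support_eq_cons] at hh
    exact (List.nodup_cons.mp hh).1
  have h2 : P₂.IsPath := by
    apply IsPath.mk'
    have hsup : P₂.support = B.support.reverse ++ Q.reverse.support.tail := by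
      simp [hP₂, support_append, support_reverse]
    rw [hsup, List.nodup_append']
    refine ⟨List.nodup_reverse.mpr hB.support_nodup,
      tail_nodup hQp.reverse.support_nodup, ?_⟩
    intro z hz hz2
    have hzB : z ∈ B.support := List.mem_reverse.mp hz
    have hzQ : z ∈ Q.support := by
      have := List.mem_of_mem_tail hz2
      rw [support_reverse, List.mem_reverse] at this
      exact this
    have := hBQ z hzB hzQ
    subst this
    exact htQtail hz2
  refine ⟨u, c, v, c, P₁, P₂, h1, h2, ?_, ?_, ?_⟩
  · intro e he hce
    rw [hP₁e, List.mem_append] at he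
    rw [hP₂e, List.mem_append, List.mem_reverse, List.mem_reverse] at hce
    rcases he with he | he
    · rcases hce with hc2 | hc2
      · exact hABdisj he hc2
      · exact hdisjE e (List.mem_append.mpr (.inl he)) (List.mem_cons.mpr (.inr hc2))
    · rw [List.mem_singleton] at he; subst he
      rcases hce with hc2 | hc2
      · exact hdisjE _ (List.mem_append.mpr (.inr hc2)) (List.mem_cons.mpr (.inl rfl))
      · exact htcQ hc2
  · intro e
    rw [hP₁e, hP₂e]
    simp only [List.mem_append, List.mem_reverse, List.mem_singleton, List.mem_cons]
    tauto
  · have hset : {e | e ∈ P₁.edges ∧ e ∈ L} = {s(t,c)} := by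
      ext e
      simp only [Set.mem_setOf_eq, Set.mem_singleton_iff, hP₁e, List.mem_append,
        List.mem_singleton, hL]
      constructor
      · rintro ⟨he | he, heL⟩
        · exact absurd heL (hdisjE e (List.mem_append.mpr (.inl he)))
        · exact he
      · rintro rfl
        exact ⟨Or.inr rfl, List.mem_cons.mpr (.inl rfl)⟩
    rw [hset]
    exact Set.ncard_singleton _

lemma constructionII {u v t c d : V} (A : G.Walk u t) (B : G.Walk t v)
    (hP : (A.append B).IsPath)
    (hadj : G.Adj t c) (Q : G.Walk c t) (hQp : Q.IsPath)
    (hnd : (s(t,c) :: Q.edges).Nodup)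
    (hdisjE : ∀ e ∈ A.edges ++ B.edges, e ∉ s(t,c) :: Q.edges)
    (hBQ : ∀ z ∈ B.support, z ∈ Q.support → z = t)
    (T : G.Walk u c) (hcd : G.Adj c d) (W : G.Walk d t)
    (hAeq : A = T.append (Walk.cons hcd W))
    (hd : d ∉ Q.support)
    (L : List (Sym2 V)) (hL : ∀ e, e ∈ L ↔ e ∈ s(t,c) :: Q.edges) :
    ∃ (u₁ v₁ u₂ v₂ : V) (P₁ : G.Walk u₁ v₁) (P₂ : G.Walk u₂ v₂),
      P₁.IsPath ∧ P₂.IsPath ∧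
      (∀ e ∈ P₁.edges, e ∉ P₂.edges) ∧
      (∀ e, (e ∈ A.edges ++ B.edges ∨ e ∈ s(t,c) :: Q.edges) ↔ (e ∈ P₁.edges ∨ e ∈ P₂.edges)) ∧
      {e | e ∈ P₁.edges ∧ e ∈ L}.ncard = 1 := by
  have hdt : d ≠ t := fun h => hd (h ▸ Q.end_mem_support)
  obtain ⟨hA, hB, hAB⟩ := isPath_decomp hP
  have hA' : (T.append (Walk.cons hcd W)).IsPath := hAeq ▸ hA
  obtain ⟨hT, hDr, hTDr⟩ := isPath_decomp hA'
  have hW : W.IsPath := hDr.of_cons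
  have hAsup : A.support = T.support ++ W.support := by
    rw [hAeq, support_append, support_cons, List.tail_cons]
  have hAnds := hA.support_nodup
  rw [hAsup] at hAnds
  obtain ⟨hTnd, hWnd, hTW⟩ := List.nodup_append'.mp hAnds
  set P₁ : G.Walk u d := T.append (Walk.cons hadj.symm W.reverse) with hP₁
  set P₂ : G.Walk d v := Walk.cons hcd.symm (Q.append B) with hP₂
  have hP₁e : P₁.edges = T.edges ++ (s(c,t) :: W.edges.reverse) := by
    simp [hP₁, edges_append, edges_reverse]
  have hP₂e : P₂.edges = s(d,c) :: (Q.edges ++ B.edges) := by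
    simp [hP₂, edges_append]
  have hAed : A.edges = T.edges ++ (s(c,d) :: W.edges) := by
    rw [hAeq, edges_append, edges_cons]
  have hPnd := hP.isTrail.edges_nodup
  rw [edges_append, hAed] at hPnd
  obtain ⟨hABnd', hBnd, hABd⟩ := List.nodup_append'.mp hPnd
  obtain ⟨hTnd', hconsWnd, hTcW⟩ := List.nodup_append'.mp hABnd'
  have hscdW : s(c,d) ∉ W.edges := (List.nodup_cons.mp hconsWnd).1
  have htcQ : s(t,c) ∉ Q.edges := (List.nodup_cons.mp hnd).1
  have hsym1 : s(c,t) = s(t,c) := Sym2.eq_swap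
  have hsym2 : s(d,c) = s(c,d) := Sym2.eq_swap
  have hne1 : s(c,t) ≠ s(d,c) := by
    rw [hsym1, hsym2]
    intro h
    rcases Sym2.eq_iff.mp h with ⟨h1, h2⟩ | ⟨h1, h2⟩
    · exact hadj.ne h1
    · exact hdt h1.symm
  have htB : t ∉ B.support.tail := by
    have hh := hB.support_nodup
    rw [support_eq_cons] at hh
    exact (List.nodup_cons.mp hh).1
  -- membership conversions into A.edges ++ B.edges
  have hTmem : ∀ e ∈ T.edges, e ∈ A.edges ++ B.edges := fun e he =>
    List.mem_append.mpr (.inl (hAed ▸ List.mem_append.mpr (.inl he)))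
  have hWmem : ∀ e ∈ W.edges, e ∈ A.edges ++ B.edges := fun e he =>
    List.mem_append.mpr (.inl (hAed ▸ List.mem_append.mpr (.inr (List.mem_cons.mpr (.inr he)))))
  have h1 : P₁.IsPath := by
    apply IsPath.mk'
    have hsup : P₁.support = T.support ++ W.support.reverse := by
      simp [hP₁, support_append, support_reverse]
    rw [hsup, List.nodup_append']
    exact ⟨hTnd, List.nodup_reverse.mpr hWnd, fun z hz hz2 => hTW hz (List.mem_reverse.mp hz2)⟩
  have h2 : P₂.IsPath := by
    apply IsPath.mk'
    have hsup : P₂.support = d :: (Q.support ++ B.support.tail) := by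
      simp [hP₂, support_cons, support_append]
    rw [hsup, List.nodup_cons, List.nodup_append']
    refine ⟨?_, hQp.support_nodup, tail_nodup hB.support_nodup, ?_⟩
    · intro hmem
      rcases List.mem_append.mp hmem with h | h
      · exact hd h
      · have hdA : d ∈ A.support := by
          rw [hAsup]
          exact List.mem_append.mpr (.inr W.start_mem_support)
        exact hdt (hAB d hdA (List.mem_of_mem_tail h))
    · intro z hz hz2
      have := hBQ z (List.mem_of_mem_tail hz2) hz
      subst this
      exact htB hz2
  refine ⟨u, d, d, v, P₁, P₂, h1, h2, ?_, ?_, ?_⟩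
  · intro e he hce
    rw [hP₁e, List.mem_append, List.mem_cons, List.mem_reverse] at he
    rw [hP₂e, List.mem_cons, List.mem_append] at hce
    rcases he with he | he | he
    · rcases hce with hc2 | hc2 | hc2
      · rw [hc2, hsym2] at he
        exact hTcW he (List.mem_cons.mpr (.inl rfl))
      · exact hdisjE e (hTmem e he) (List.mem_cons.mpr (.inr hc2))
      · exact hABd (List.mem_append.mpr (.inl he)) hc2
    · subst he
      rcases hce with hc2 | hc2 | hc2
      · exact hne1 hc2
      · rw [hsym1] at hc2; exact htcQ hc2
      · exact hdisjE _ (List.mem_append.mpr (.inr hc2)) (by rw [hsym1]; exact List.mem_cons.mpr (.inl rfl))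
    · have heW : e ∈ W.edges := he
      rcases hce with hc2 | hc2 | hc2
      · rw [hc2, hsym2] at heW
        exact hscdW heW
      · exact hdisjE e (hWmem e heW) (List.mem_cons.mpr (.inr hc2))
      · exact hABd (List.mem_append.mpr (.inr (List.mem_cons.mpr (.inr heW)))) hc2
  · intro e
    rw [hAed, hP₁e, hP₂e]
    simp only [List.mem_append, List.mem_cons, List.mem_reverse]
    rw [hsym1, hsym2]
    tauto
  · have hset : {e | e ∈ P₁.edges ∧ e ∈ L} = {s(t,c)} := by
      ext e
      simp only [Set.mem_setOf_eq, Set.mem_singleton_iff, hP₁e, List.mem_append,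
        List.mem_cons, List.mem_reverse, hL]
      constructor
      · rintro ⟨he | he | he, heL⟩
        · exact absurd (List.mem_cons.mpr heL) (hdisjE e (hTmem e he))
        · rw [he, hsym1]
        · exact absurd (List.mem_cons.mpr heL) (hdisjE e (hWmem e he))
      · rintro rfl
        exact ⟨Or.inr (Or.inl hsym1.symm), Or.inl rfl⟩
    rw [hset]
    exact Set.ncard_singleton _

lemma prefix_asymm {x y a b : V} {W : G.Walk x y} (hW : W.IsPath) (hab : a ≠ b)
    {T₁ : G.Walk x a} {D₁ : G.Walk a y} {T₂ : G.Walk x b} {D₂ : G.Walk b y}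
    (h1 : W = T₁.append D₁) (h2 : W = T₂.append D₂)
    (hbD : b ∈ D₁.support) (haD : a ∈ D₂.support) : False := by
  have hs1 : W.support = T₁.support ++ D₁.support.tail := by rw [h1, support_append]
  have hs2 : W.support = T₂.support ++ D₂.support.tail := by rw [h2, support_append]
  have hnd := hW.support_nodup
  have hb1 : b ∈ D₁.support.tail := by
    rw [support_eq_cons] at hbD
    rcases List.mem_cons.mp hbD with h | h
    · exact absurd h.symm hab
    · exact h
  have ha2 : a ∈ D₂.support.tail := by
    rw [support_eq_cons] at haD
    rcases List.mem_cons.mp haD with h | h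
    · exact absurd h hab
    · exact h
  have hnd1 := hnd; rw [hs1] at hnd1
  have hnd2 := hnd; rw [hs2] at hnd2
  obtain ⟨_, _, hdisj1⟩ := List.nodup_append'.mp hnd1
  obtain ⟨_, _, hdisj2⟩ := List.nodup_append'.mp hnd2
  have hbT1 : b ∉ T₁.support := fun h => hdisj1 h hb1
  have haT2 : a ∉ T₂.support := fun h => hdisj2 h ha2
  have hpre1 : T₁.support <+: W.support := ⟨D₁.support.tail, hs1.symm⟩
  have hpre2 : T₂.support <+: W.support := ⟨D₂.support.tail, hs2.symm⟩
  rcases List.prefix_or_prefix_of_prefix hpre1 hpre2 with h | h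
  · exact haT2 (h.subset T₁.end_mem_support)
  · exact hbT1 (h.subset T₂.end_mem_support)


lemma exists_first_touch {x y : V} (W : G.Walk x y) (T : Set V)
    (hz : ∃ z ∈ W.support, z ∈ T) :
    ∃ t, t ∈ T ∧ ∃ (W₁ : G.Walk x t) (W₂ : G.Walk t y),
      W = W₁.append W₂ ∧ ∀ z ∈ W₁.support, z ∈ T → z = t := by
  induction W with
  | nil =>
    obtain ⟨z, hz1, hz2⟩ := hz
    simp only [support_nil, List.mem_singleton] at hz1
    subst hz1
    exact ⟨z, hz2, Walk.nil, Walk.nil, rfl, by simp⟩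
  | @cons a b y h q ih =>
    by_cases ha : a ∈ T
    · exact ⟨a, ha, Walk.nil, Walk.cons h q, rfl, by simp⟩
    · obtain ⟨z, hz1, hz2⟩ := hz
      rw [support_cons, List.mem_cons] at hz1
      rcases hz1 with rfl | hz1
      · exact absurd hz2 ha
      · obtain ⟨t, ht, W₁, W₂, heq, hprop⟩ := ih ⟨z, hz1, hz2⟩
        refine ⟨t, ht, Walk.cons h W₁, W₂, by rw [cons_append, heq], ?_⟩
        intro z' hz' hz'T
        rw [support_cons, List.mem_cons] at hz'
        rcases hz' with rfl | hz'
        · exact absurd hz'T ha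
        · exact hprop z' hz' hz'T


lemma reverse_tail_nodup {t : V} (D : G.Walk t t) (h : D.support.tail.Nodup) :
    D.reverse.support.tail.Nodup := by
  rw [support_reverse]
  rcases hs : D.support.tail with _ | ⟨x, s'⟩
  · have h0 : D.support = [t] := by rw [support_eq_cons, hs]
    rw [h0]; simp
  · have hsup : D.support = t :: x :: s' := by rw [support_eq_cons, hs]
    have h2 : (x :: s').getLast? = some t := by
      have h3 : D.support.getLast? = some t := by
        rw [List.getLast?_eq_getLast D.support_ne_nil, D.getLast_support]
      rw [hsup, List.getLast?_cons_cons] at h3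
      exact h3
    have hlast : (x :: s').getLast (by simp) = t := by
      rw [List.getLast?_eq_getLast (l := x :: s') (by simp)] at h2
      exact Option.some.inj h2
    have hl : x :: s' = (x :: s').dropLast ++ [t] := by
      conv_lhs => rw [← List.dropLast_append_getLast (l := x :: s') (by simp)]
      rw [hlast]
    have hnd : ((x :: s').dropLast ++ [t]).Nodup := by rw [← hl, ← hs]; exact h
    obtain ⟨hnd1, -, hdisj⟩ := List.nodup_append'.mp hnd
    rw [hsup]
    have hrw : (t :: x :: s').reverse = (t :: (x :: s').dropLast.reverse) ++ [t] := by
      conv_lhs => rw [show (t : V) :: x :: s' = t :: (x :: s') from rfl, hl]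
      simp
    rw [hrw, List.tail_append_of_ne_nil (by simp), List.tail_cons]
    rw [List.nodup_append']
    refine ⟨List.nodup_reverse.mpr hnd1, List.nodup_singleton t, ?_⟩
    intro z hz hz2
    rw [List.mem_singleton] at hz2
    subst hz2
    exact hdisj (List.mem_reverse.mp hz) (List.mem_singleton.mpr rfl)


lemma core {u v t : V} (A : G.Walk u t) (B : G.Walk t v) (D : G.Walk t t)
    (hP : (A.append B).IsPath) (hD : D.IsCycle)
    (hdisjE : ∀ e ∈ A.edges ++ B.edges, e ∉ D.edges)
    (hB : ∀ z ∈ B.support, z ∈ D.support → z = t)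
    (hch : ∀ e₁ e₂ : Sym2 V,
      (e₁ ∈ A.edges ++ B.edges ∧ ∃ a b, e₁ = s(a,b) ∧ a ∈ D.support ∧ b ∈ D.support) →
      (e₂ ∈ A.edges ++ B.edges ∧ ∃ a b, e₂ = s(a,b) ∧ a ∈ D.support ∧ b ∈ D.support) →
      e₁ = e₂)
    (L : List (Sym2 V)) (hL : ∀ e, e ∈ L ↔ e ∈ D.edges) :
    ∃ (u₁ v₁ u₂ v₂ : V) (P₁ : G.Walk u₁ v₁) (P₂ : G.Walk u₂ v₂),
      P₁.IsPath ∧ P₂.IsPath ∧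
      (∀ e ∈ P₁.edges, e ∉ P₂.edges) ∧
      (∀ e, (e ∈ A.edges ++ B.edges ∨ e ∈ D.edges) ↔ (e ∈ P₁.edges ∨ e ∈ P₂.edges)) ∧
      {e | e ∈ P₁.edges ∧ e ∈ L}.ncard = 1 := by
  have hnn : ¬D.Nil := fun h => hD.isCircuit.ne_nil h.eq_nil
  obtain ⟨c₁, h₁, Q₁, hDeq⟩ := Walk.not_nil_iff.mp hnn
  have hnn2 : ¬D.reverse.Nil := by
    rw [nil_iff_length_eq, length_reverse, ← nil_iff_length_eq]
    exact hnn
  obtain ⟨c₂, h₂, Q₂, hDreq⟩ := Walk.not_nil_iff.mp hnn2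
  have hDed : D.edges = s(t,c₁) :: Q₁.edges := by rw [hDeq, edges_cons]
  have hDsup : D.support = t :: Q₁.support := by rw [hDeq, support_cons]
  have hDnd : D.edges.Nodup := hD.isCircuit.isTrail.edges_nodup
  have hnd₁ : (s(t,c₁) :: Q₁.edges).Nodup := hDed ▸ hDnd
  have hQ₁p : Q₁.IsPath := by
    apply IsPath.mk'
    have hQs : Q₁.support = D.support.tail := by rw [hDsup, List.tail_cons]
    rw [hQs]; exact hD.support_nodup
  have hDrev_ed : D.reverse.edges = s(t,c₂) :: Q₂.edges := by rw [hDreq, edges_cons]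
  have hDrev_sup : D.reverse.support = t :: Q₂.support := by rw [hDreq, support_cons]
  have hDrevnd : D.reverse.edges.Nodup := by
    rw [edges_reverse]; exact List.nodup_reverse.mpr hDnd
  have hnd₂ : (s(t,c₂) :: Q₂.edges).Nodup := hDrev_ed ▸ hDrevnd
  have hQ₂p : Q₂.IsPath := by
    apply IsPath.mk'
    have h' := reverse_tail_nodup D hD.support_nodup
    have hQs : Q₂.support = D.reverse.support.tail := by rw [hDrev_sup, List.tail_cons]
    rw [hQs]; exact h'
  have hQ₁sub : ∀ z ∈ Q₁.support, z ∈ D.support := fun z hz => by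
    rw [hDsup]; exact List.mem_cons.mpr (.inr hz)
  have hQ₂sub : ∀ z ∈ Q₂.support, z ∈ D.support := fun z hz => by
    have hzz : z ∈ D.reverse.support := by
      rw [hDrev_sup]; exact List.mem_cons.mpr (.inr hz)
    rwa [support_reverse, List.mem_reverse] at hzz
  have hc₁D : c₁ ∈ D.support := hQ₁sub _ Q₁.start_mem_support
  have hc₂D : c₂ ∈ D.support := hQ₂sub _ Q₂.start_mem_support
  have hedge₂ : ∀ e, e ∈ s(t,c₂) :: Q₂.edges ↔ e ∈ D.edges := by
    intro e; rw [← hDrev_ed, edges_reverse, List.mem_reverse]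
  have hBQ₁ : ∀ z ∈ B.support, z ∈ Q₁.support → z = t :=
    fun z hz hz2 => hB z hz (hQ₁sub z hz2)
  have hBQ₂ : ∀ z ∈ B.support, z ∈ Q₂.support → z = t :=
    fun z hz hz2 => hB z hz (hQ₂sub z hz2)
  have hdisj₁ : ∀ e ∈ A.edges ++ B.edges, e ∉ s(t,c₁) :: Q₁.edges := by
    intro e he; rw [← hDed]; exact hdisjE e he
  have hdisj₂ : ∀ e ∈ A.edges ++ B.edges, e ∉ s(t,c₂) :: Q₂.edges :=
    fun e he hmem => hdisjE e he ((hedge₂ e).mp hmem)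
  have hL₁ : ∀ e, e ∈ L ↔ e ∈ s(t,c₁) :: Q₁.edges := by intro e; rw [hL e, hDed]
  have hL₂ : ∀ e, e ∈ L ↔ e ∈ s(t,c₂) :: Q₂.edges := by intro e; rw [hL e, ← hedge₂ e]
  have hcc : c₁ ≠ c₂ := by
    intro h
    by_cases hQ2e : Q₂.edges = []
    · have hQnil : Q₂.Nil := by
        rw [nil_iff_length_eq, ← length_edges, hQ2e]; rfl
      exact h₂.ne hQnil.eq.symm
    · have heq : D.edges.reverse = s(t,c₂) :: Q₂.edges := by
        rw [← edges_reverse, hDrev_ed]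
      have heq2 : D.edges = Q₂.edges.reverse ++ [s(t,c₂)] := by
        rw [← List.reverse_reverse D.edges, heq]; simp
      obtain ⟨x, xs, hx⟩ := List.exists_cons_of_ne_nil
        (fun hr => hQ2e (List.reverse_eq_nil_iff.mp hr))
      rw [hDed, hx] at heq2
      simp only [List.cons_append] at heq2
      have hhead : s(t,c₁) = x := by injection heq2
      have hxQ : x ∈ Q₂.edges := by
        rw [← List.mem_reverse, hx]; exact List.mem_cons.mpr (.inl rfl)
      rw [← hhead, h] at hxQ
      exact (List.nodup_cons.mp hnd₂).1 hxQ
  by_cases hc₁A : c₁ ∉ A.support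
  · obtain ⟨u₁,v₁,u₂,v₂,P₁,P₂,a1,a2,a3,a4,a5⟩ :=
      constructionI A B hP h₁ Q₁ hQ₁p hnd₁ hdisj₁ hBQ₁ hc₁A L hL₁
    exact ⟨u₁,v₁,u₂,v₂,P₁,P₂,a1,a2,a3, fun e => by rw [hDed]; exact a4 e, a5⟩
  push_neg at hc₁A
  by_cases hc₂A : c₂ ∉ A.support
  · obtain ⟨u₁,v₁,u₂,v₂,P₁,P₂,a1,a2,a3,a4,a5⟩ :=
      constructionI A B hP h₂ Q₂ hQ₂p hnd₂ hdisj₂ hBQ₂ hc₂A L hL₂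
    exact ⟨u₁,v₁,u₂,v₂,P₁,P₂,a1,a2,a3, fun e => by rw [← hedge₂ e]; exact a4 e, a5⟩
  push_neg at hc₂A
  obtain ⟨T₁, Dr₁, hA₁⟩ := Walk.mem_support_iff_exists_append.mp hc₁A
  obtain ⟨d₁, hcd₁, W₁, hDr₁eq⟩ := Walk.not_nil_iff.mp (Walk.not_nil_of_ne (p := Dr₁) h₁.ne')
  obtain ⟨T₂, Dr₂, hA₂⟩ := Walk.mem_support_iff_exists_append.mp hc₂A
  obtain ⟨d₂, hcd₂, W₂, hDr₂eq⟩ := Walk.not_nil_iff.mp (Walk.not_nil_of_ne (p := Dr₂) h₂.ne')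
  by_cases hd₁Q : d₁ ∉ Q₁.support
  · obtain ⟨u₁,v₁,u₂,v₂,P₁,P₂,a1,a2,a3,a4,a5⟩ :=
      constructionII A B hP h₁ Q₁ hQ₁p hnd₁ hdisj₁ hBQ₁ T₁ hcd₁ W₁
        (by rw [hA₁, hDr₁eq]) hd₁Q L hL₁
    exact ⟨u₁,v₁,u₂,v₂,P₁,P₂,a1,a2,a3, fun e => by rw [hDed]; exact a4 e, a5⟩
  push_neg at hd₁Q
  by_cases hd₂Q : d₂ ∉ Q₂.support
  · obtain ⟨u₁,v₁,u₂,v₂,P₁,P₂,a1,a2,a3,a4,a5⟩ :=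
      constructionII A B hP h₂ Q₂ hQ₂p hnd₂ hdisj₂ hBQ₂ T₂ hcd₂ W₂
        (by rw [hA₂, hDr₂eq]) hd₂Q L hL₂
    exact ⟨u₁,v₁,u₂,v₂,P₁,P₂,a1,a2,a3, fun e => by rw [← hedge₂ e]; exact a4 e, a5⟩
  push_neg at hd₂Q
  exfalso
  have he₁ : s(c₁,d₁) ∈ A.edges ++ B.edges := by
    apply List.mem_append.mpr
    left
    rw [hA₁, hDr₁eq, edges_append, edges_cons]
    exact List.mem_append.mpr (.inr (List.mem_cons.mpr (.inl rfl)))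
  have he₂ : s(c₂,d₂) ∈ A.edges ++ B.edges := by
    apply List.mem_append.mpr
    left
    rw [hA₂, hDr₂eq, edges_append, edges_cons]
    exact List.mem_append.mpr (.inr (List.mem_cons.mpr (.inl rfl)))
  have hchord := hch s(c₁,d₁) s(c₂,d₂)
    ⟨he₁, c₁, d₁, rfl, hc₁D, hQ₁sub d₁ hd₁Q⟩
    ⟨he₂, c₂, d₂, rfl, hc₂D, hQ₂sub d₂ hd₂Q⟩
  rcases Sym2.eq_iff.mp hchord with ⟨hx, hy⟩ | ⟨hx, hy⟩
  · exact hcc hx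
  · have hAp : A.IsPath := (isPath_decomp hP).1
    apply prefix_asymm hAp hcc hA₁ hA₂
    · rw [hDr₁eq, support_cons]
      exact List.mem_cons.mpr (.inr (hy ▸ W₁.start_mem_support))
    · rw [hDr₂eq, support_cons]
      exact List.mem_cons.mpr (.inr (hx.symm ▸ W₂.start_mem_support))


end DecompAux

/-- An edge of `G` is a chord of the cycle `C` if it is not an edge of `C` but joins
two (distinct) vertices of `C`. -/
def IsChord {V : Type} (G : SimpleGraph V) {w : V} (C : G.Walk w w) (e : Sym2 V) : Prop :=
  e ∈ G.edgeSet ∧ e ∉ C.edges ∧ ∃ a b : V, e = s(a, b) ∧ a ∈ C.support ∧ b ∈ C.support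

/-- If a connected graph decomposes into a path `P` and a cycle `C` such that `P` contains
at most one chord of `C`, then it decomposes into two paths, the first of which contains
exactly one edge of `C`. -/
theorem decomp_path_cycle_one_chord {V : Type} (G : SimpleGraph V) (hconn : G.Connected)
    {u v w : V} (P : G.Walk u v) (C : G.Walk w w)
    (hP : P.IsPath) (hC : C.IsCycle)
    (hdisj : ∀ e ∈ P.edges, e ∉ C.edges)
    (hcover : ∀ e, e ∈ G.edgeSet ↔ e ∈ P.edges ∨ e ∈ C.edges)
    (hchord : {e : Sym2 V | e ∈ P.edges ∧ IsChord G C e}.ncard ≤ 1) :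
    ∃ (u₁ v₁ u₂ v₂ : V) (P₁ : G.Walk u₁ v₁) (P₂ : G.Walk u₂ v₂),
      P₁.IsPath ∧ P₂.IsPath ∧
      (∀ e ∈ P₁.edges, e ∉ P₂.edges) ∧
      (∀ e, e ∈ G.edgeSet ↔ e ∈ P₁.edges ∨ e ∈ P₂.edges) ∧
      {e : Sym2 V | e ∈ P₁.edges ∧ e ∈ C.edges}.ncard = 1 := by
  classical
  open SimpleGraph.Walk in
  have hzex : ∃ z, z ∈ P.support ∧ z ∈ C.support := by
    by_cases hu : u ∈ C.support
    · exact ⟨u, P.start_mem_support, hu⟩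
    · obtain ⟨W⟩ := hconn.preconnected u w
      obtain ⟨t₀, ht₀C, W₁, W₂, hWeq, hprop⟩ := DecompAux.exists_first_touch W
        {x | x ∈ C.support} ⟨w, W.end_mem_support, C.start_mem_support⟩
      have hW₁nn : ¬W₁.Nil := by
        intro h
        exact hu (by rw [h.eq]; exact ht₀C)
      have hW₁rnn : ¬W₁.reverse.Nil := by
        rw [Walk.nil_iff_length_eq, Walk.length_reverse, ← Walk.nil_iff_length_eq]
        exact hW₁nn
      obtain ⟨p, hp, Z, hZeq⟩ := Walk.not_nil_iff.mp hW₁rnn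
      have hpW₁ : p ∈ W₁.support := by
        have hh : p ∈ W₁.reverse.support := by
          rw [hZeq, Walk.support_cons]
          exact List.mem_cons.mpr (.inr Z.start_mem_support)
        rwa [Walk.support_reverse, List.mem_reverse] at hh
      have hpC : p ∉ C.support := by
        intro hpc
        exact hp.ne' (hprop p hpW₁ hpc)
      have hedge : s(t₀,p) ∈ G.edgeSet := G.mem_edgeSet.mpr hp
      rcases (hcover _).mp hedge with hPe | hCe
      · exact ⟨t₀, P.fst_mem_support_of_mem_edges hPe, ht₀C⟩
      · exact absurd (C.snd_mem_support_of_mem_edges hCe) hpC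
  obtain ⟨z, hzP, hzC⟩ := hzex
  obtain ⟨t, htC, B', A₀, hReq, hpropB⟩ := DecompAux.exists_first_touch P.reverse
    {x | x ∈ C.support} ⟨z, by rwa [Walk.support_reverse, List.mem_reverse], hzC⟩
  set A : G.Walk u t := A₀.reverse with hAdef
  set B : G.Walk t v := B'.reverse with hBdef
  have hPAB : P = A.append B := by
    have h2 : P = (B'.append A₀).reverse := by rw [← hReq, Walk.reverse_reverse]
    rw [h2, Walk.reverse_append]
  have hP' : (A.append B).IsPath := by rw [← hPAB]; exact hP
  have htC' : t ∈ C.support := htC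
  set D : G.Walk t t := C.rotate t htC' with hDdef
  have hD : D.IsCycle := hC.rotate htC'
  have hDedge : ∀ e, e ∈ D.edges ↔ e ∈ C.edges := fun e => (Walk.rotate_edges C t htC').mem_iff
  have hDsup : ∀ x, x ∈ D.support → x ∈ C.support := by
    intro x hx
    rw [Walk.support_eq_cons] at hx
    rcases List.mem_cons.mp hx with rfl | hx
    · exact htC'
    · have hx' : x ∈ C.support.tail := (Walk.support_rotate C t htC').mem_iff.mp hx
      rw [Walk.support_eq_cons]
      exact List.mem_cons.mpr (.inr hx')
  have hPedges : P.edges = A.edges ++ B.edges := by rw [hPAB, Walk.edges_append]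
  have hdisjE : ∀ e ∈ A.edges ++ B.edges, e ∉ D.edges := by
    intro e he hd
    exact hdisj e (by rw [hPedges]; exact he) ((hDedge e).mp hd)
  have hBsup : ∀ z' ∈ B.support, z' ∈ D.support → z' = t := by
    intro z' hz' hz'd
    apply hpropB z' _ (hDsup z' hz'd)
    rwa [hBdef, Walk.support_reverse, List.mem_reverse] at hz'
  have hfin : {e : Sym2 V | e ∈ P.edges ∧ IsChord G C e}.Finite :=
    Set.Finite.subset (P.edges.finite_toSet) (fun e he => he.1)
  have huniq := (Set.ncard_le_one hfin).mp hchord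
  have hch : ∀ e₁ e₂ : Sym2 V,
      (e₁ ∈ A.edges ++ B.edges ∧ ∃ a b, e₁ = s(a,b) ∧ a ∈ D.support ∧ b ∈ D.support) →
      (e₂ ∈ A.edges ++ B.edges ∧ ∃ a b, e₂ = s(a,b) ∧ a ∈ D.support ∧ b ∈ D.support) →
      e₁ = e₂ := by
    rintro e₁ e₂ ⟨h1, a, b, hab, haD, hbD⟩ ⟨h2, a', b', hab', haD', hbD'⟩
    have hm1 : e₁ ∈ P.edges := by rw [hPedges]; exact h1
    have hm2 : e₂ ∈ P.edges := by rw [hPedges]; exact h2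
    exact huniq e₁
      ⟨hm1, (hcover e₁).mpr (.inl hm1), fun hc => hdisj e₁ hm1 hc,
        a, b, hab, hDsup a haD, hDsup b hbD⟩ e₂
      ⟨hm2, (hcover e₂).mpr (.inl hm2), fun hc => hdisj e₂ hm2 hc,
        a', b', hab', hDsup a' haD', hDsup b' hbD'⟩
  obtain ⟨u₁,v₁,u₂,v₂,P₁,P₂,a1,a2,a3,a4,a5⟩ :=
    DecompAux.core A B D hP' hD hdisjE hBsup hch C.edges (fun e => (hDedge e).symm)
  refine ⟨u₁,v₁,u₂,v₂,P₁,P₂,a1,a2,a3, ?_, a5⟩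
  intro e
  rw [hcover e, hPedges]
  have h4 := a4 e
  rw [hDedge e] at h4
  exact h4
end

section
/- If G is a proper subdivision of K_5 minus an edge (at least one edge is subdivided), then pn(G) = 2. -/
/-- `K₅` minus one edge. -/
def K5m : SimpleGraph (Fin 5) := (SimpleGraph.completeGraph (Fin 5)).deleteEdges {s(0, 1)}

/-- `G` is a subdivision of `H`: branch vertices are given by the embedding `f`, and every
edge of `H` is realized by a path of `G`; these paths are internally disjoint, they cover
all edges and all vertices of `G`. -/
def IsSubdivisionOf {V W : Type} (G : SimpleGraph V) (H : SimpleGraph W)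
    (f : W ↪ V) (P : ∀ a b : W, H.Adj a b → G.Walk (f a) (f b)) : Prop :=
  (∀ a b (h : H.Adj a b), (P a b h).IsPath) ∧
  (∀ a b (h : H.Adj a b), P b a h.symm = (P a b h).reverse) ∧
  (∀ e : Sym2 V, e ∈ G.edgeSet ↔ ∃ (a b : W) (h : H.Adj a b), e ∈ (P a b h).edges) ∧
  (∀ a b (h : H.Adj a b) (w : W), (f w : V) ∈ (P a b h).support → w = a ∨ w = b) ∧
  (∀ a b c d (h₁ : H.Adj a b) (h₂ : H.Adj c d), s(a, b) ≠ s(c, d) →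
    ∀ x : V, x ∈ (P a b h₁).support → x ∈ (P c d h₂).support →
      (x = f a ∨ x = f b) ∧ (x = f c ∨ x = f d)) ∧
  (∀ x : V, ∃ (a b : W) (h : H.Adj a b), x ∈ (P a b h).support)

open SimpleGraph

lemma K5m_adj_iff (a b : Fin 5) : K5m.Adj a b ↔ a ≠ b ∧ s(a,b) ≠ s(0,1) := by
  simp [K5m, completeGraph, SimpleGraph.deleteEdges]
  tauto

instance : DecidableRel K5m.Adj := fun a b =>
  decidable_of_iff _ (K5m_adj_iff a b).symm

section helpers
variable {V : Type} {G : SimpleGraph V}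

lemma mem_support_of_mem_edges' {u v t : V} (p : G.Walk u v) {e : Sym2 V}
    (he : e ∈ p.edges) (ht : t ∈ e) : t ∈ p.support := by
  induction e with
  | _ x y =>
    rcases Sym2.mem_iff.mp ht with rfl | rfl
    · exact p.fst_mem_support_of_mem_edges he
    · exact p.snd_mem_support_of_mem_edges he

lemma isPath_append' {u v w : V} {p : G.Walk u v} {q : G.Walk v w}
    (hp : p.IsPath) (hq : q.IsPath)
    (h : ∀ x, x ∈ p.support → x ∈ q.support → x = v) :
    (p.append q).IsPath := by
  rw [Walk.isPath_def, Walk.support_append, List.nodup_append]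
  have hq' := hq.support_nodup
  rw [q.support_eq_cons, List.nodup_cons] at hq'
  refine ⟨hp.support_nodup, hq'.2, ?_⟩
  intro x hxp y hxq hxy
  subst hxy
  have hx : x ∈ q.support := by
    rw [q.support_eq_cons]; exact List.mem_cons_of_mem _ hxq
  have := h x hxp hx
  subst this
  exact hq'.1 hxq

end helpers

lemma pickJ {α β : Type*} (f : α ↪ β) {y : β} {p q s : α}
    (c1 : y = f p ∨ y = f q) (c2 : y = f q ∨ y = f s)
    (h1 : p ≠ q) (h2 : p ≠ s) : y = f q := by
  rcases c1 with rfl | rfl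
  · rcases c2 with h | h
    · exact absurd (f.injective h) h1
    · exact absurd (f.injective h) h2
  · rfl

lemma pickF {α β : Type*} (f : α ↪ β) {y : β} {p q r s : α}
    (c1 : y = f p ∨ y = f q) (c2 : y = f r ∨ y = f s)
    (h1 : p ≠ r) (h2 : p ≠ s) (h3 : q ≠ r) (h4 : q ≠ s) : False := by
  rcases c1 with rfl | rfl <;> rcases c2 with h | h
  · exact absurd (f.injective h) h1
  · exact absurd (f.injective h) h2
  · exact absurd (f.injective h) h3
  · exact absurd (f.injective h) h4
lemma construct {V : Type} (G : SimpleGraph V) (f : Fin 5 ↪ V)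
    (P : ∀ a b : Fin 5, K5m.Adj a b → G.Walk (f a) (f b))
    (hsub : IsSubdivisionOf G K5m f P)
    (a0 a1 a2 a3 a4 b0 b1 b2 b3 b4 : Fin 5)
    (hA0 : K5m.Adj a0 b0)
    (hlen : 2 ≤ (P a0 b0 hA0).length)
    (h1 : K5m.Adj a0 a1) (h2 : K5m.Adj a1 a2) (h3 : K5m.Adj a2 a3) (h4 : K5m.Adj a3 a4)
    (g1 : K5m.Adj b0 b1) (g2 : K5m.Adj b1 b2) (g3 : K5m.Adj b2 b3) (g4 : K5m.Adj b3 b4)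
    (hndA : [a0,a1,a2,a3,a4].Nodup) (hndB : [b0,b1,b2,b3,b4].Nodup)
    (hedges : ∀ c d : Fin 5, K5m.Adj c d →
      s(c,d) ∈ [s(a0,b0), s(a0,a1), s(a1,a2), s(a2,a3), s(a3,a4),
                s(b0,b1), s(b1,b2), s(b2,b3), s(b3,b4)])
    (hndE : [s(a0,b0), s(a0,a1), s(a1,a2), s(a2,a3), s(a3,a4),
             s(b0,b1), s(b1,b2), s(b2,b3), s(b3,b4)].Nodup) :
    ∃ D, IsPathDecomp G D ∧ D.length = 2 := by
  obtain ⟨hpath, hrev, hedge, hbranch, hdisj, -⟩ := hsub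
  simp only [List.nodup_cons, List.mem_cons, List.mem_singleton, not_or, List.not_mem_nil,
    not_false_iff, and_true, List.nodup_nil, true_and] at hndA hndB hndE
  obtain ⟨⟨A01, A02, A03, A04⟩, ⟨A12, A13, A14⟩, ⟨A23, A24⟩, A34⟩ := hndA
  obtain ⟨⟨B01, B02, B03, B04⟩, ⟨B12, B13, B14⟩, ⟨B23, B24⟩, B34⟩ := hndB
  obtain ⟨⟨E01, E02, E03, E04, E05, E06, E07, E08⟩, ⟨E12, E13, E14, E15, E16, E17, E18⟩,
    ⟨E23, E24, E25, E26, E27, E28⟩, ⟨E34, E35, E36, E37, E38⟩, ⟨E45, E46, E47, E48⟩,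
    ⟨E56, E57, E58⟩, ⟨E67, E68⟩, E78⟩ := hndE
  -- transfer of edge membership between equal K5m-edges
  have hPmem : ∀ {c d c' d' : Fin 5} (h : K5m.Adj c d) (h' : K5m.Adj c' d'),
      s(c,d) = s(c',d') → ∀ e, e ∈ (P c d h).edges → e ∈ (P c' d' h').edges := by
    intro c d c' d' h h' hs e he
    rcases Sym2.eq_iff.mp hs with ⟨rfl, rfl⟩ | ⟨rfl, rfl⟩
    · exact he
    · rw [show P d c h' = (P c d h).reverse from hrev c d h, Walk.edges_reverse,
        List.mem_reverse]
      exact he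
  -- generic edge-disjointness of distinct pieces
  have hedisj : ∀ (c d c' d' : Fin 5) (h : K5m.Adj c d) (h' : K5m.Adj c' d'),
      s(c,d) ≠ s(c',d') → ∀ e, e ∈ (P c d h).edges → e ∈ (P c' d' h').edges → False := by
    intro c d c' d' h h' hne e he he'
    induction e with
    | _ z y =>
      have hzy : G.Adj z y := (Walk.edges_subset_edgeSet _ he : s(z,y) ∈ G.edgeSet)
      have inj := f.injective
      obtain ⟨hz1, hz2⟩ := hdisj c d c' d' h h' hne z
        ((P c d h).fst_mem_support_of_mem_edges he)
        ((P c' d' h').fst_mem_support_of_mem_edges he')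
      obtain ⟨hy1, hy2⟩ := hdisj c d c' d' h h' hne y
        ((P c d h).snd_mem_support_of_mem_edges he)
        ((P c' d' h').snd_mem_support_of_mem_edges he')
      apply hne
      rw [Sym2.eq_iff]
      rcases hz1 with rfl | rfl <;> rcases hy1 with rfl | rfl <;>
        rcases hz2 with h5 | h5 <;> rcases hy2 with h6 | h6 <;>
        first
          | exact absurd rfl hzy.ne
          | (left; exact ⟨inj h5, inj h6⟩)
          | (right; exact ⟨inj h5, inj h6⟩)
          | (left; exact ⟨inj h6, inj h5⟩)
          | (right; exact ⟨inj h6, inj h5⟩)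
          | exact absurd (inj (h5.trans h6.symm)) h.ne
          | exact absurd (inj (h6.trans h5.symm)) h.ne
  -- split the subdivided path
  obtain ⟨x, hadj, w', hw⟩ := Walk.exists_eq_cons_of_ne (f.injective.ne hA0.ne) (P a0 b0 hA0)
  have hwpath := hpath a0 b0 hA0
  rw [hw, Walk.cons_isPath_iff] at hwpath
  obtain ⟨hw'path, ha0w'⟩ := hwpath
  have hxa0 : x ≠ f a0 := hadj.ne'
  have hxsup : x ∈ (P a0 b0 hA0).support := by
    rw [hw, Walk.support_cons]
    exact List.mem_cons_of_mem _ w'.start_mem_support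
  have hxb0 : x ≠ f b0 := by
    rintro rfl
    have hnil : w' = Walk.nil := Walk.isPath_iff_eq_nil.mp hw'path
    rw [hw, hnil] at hlen
    simp at hlen
  have hxw : s(f a0, x) ∈ (P a0 b0 hA0).edges := by
    rw [hw, Walk.edges_cons]; exact List.mem_cons_self
  have hxw2 : s(x, f a0) ∈ (P a0 b0 hA0).edges := by
    rw [Sym2.eq_swap]; exact hxw
  have hw'w : ∀ e, e ∈ w'.edges → e ∈ (P a0 b0 hA0).edges := by
    intro e he; rw [hw, Walk.edges_cons]; exact List.mem_cons_of_mem _ he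
  have hw'sub : ∀ y, y ∈ w'.support → y ∈ (P a0 b0 hA0).support := by
    intro y hy; rw [hw, Walk.support_cons]; exact List.mem_cons_of_mem _ hy
  -- the two walks
  set A : G.Walk x (f a4) := (Walk.cons hadj.symm Walk.nil).append
    ((P a0 a1 h1).append ((P a1 a2 h2).append ((P a2 a3 h3).append (P a3 a4 h4)))) with hA
  set B : G.Walk x (f b4) := w'.append
    ((P b0 b1 g1).append ((P b1 b2 g2).append ((P b2 b3 g3).append (P b3 b4 g4)))) with hB
  have eAmem : ∀ e, e ∈ A.edges ↔ (e = s(x, f a0) ∨ e ∈ (P a0 a1 h1).edges ∨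
      e ∈ (P a1 a2 h2).edges ∨ e ∈ (P a2 a3 h3).edges ∨ e ∈ (P a3 a4 h4).edges) := by
    intro e
    rw [hA]
    simp only [Walk.edges_append, Walk.edges_cons, Walk.edges_nil, List.mem_append,
      List.mem_cons, List.not_mem_nil, or_false, List.nil_append]
  have eBmem : ∀ e, e ∈ B.edges ↔ (e ∈ w'.edges ∨ e ∈ (P b0 b1 g1).edges ∨
      e ∈ (P b1 b2 g2).edges ∨ e ∈ (P b2 b3 g3).edges ∨ e ∈ (P b3 b4 g4).edges) := by
    intro e
    rw [hB]
    simp only [Walk.edges_append, List.mem_append, or_assoc]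
  -- A is a path
  have p34 : ((P a2 a3 h3).append (P a3 a4 h4)).IsPath := by
    refine isPath_append' (hpath _ _ _) (hpath _ _ _) (fun y hy1 hy2 => ?_)
    obtain ⟨c1, c2⟩ := hdisj _ _ _ _ h3 h4 E34 y hy1 hy2
    exact pickJ f c1 c2 A23 A24
  have p234 : ((P a1 a2 h2).append ((P a2 a3 h3).append (P a3 a4 h4))).IsPath := by
    refine isPath_append' (hpath _ _ _) p34 (fun y hy1 hy2 => ?_)
    rw [Walk.mem_support_append_iff] at hy2
    rcases hy2 with hy2 | hy2
    · obtain ⟨c1, c2⟩ := hdisj _ _ _ _ h2 h3 E23 y hy1 hy2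
      exact pickJ f c1 c2 A12 A13
    · obtain ⟨c1, c2⟩ := hdisj _ _ _ _ h2 h4 E24 y hy1 hy2
      exact (pickF f c1 c2 A13 A14 A23 A24).elim
  have p1234 : ((P a0 a1 h1).append ((P a1 a2 h2).append
      ((P a2 a3 h3).append (P a3 a4 h4)))).IsPath := by
    refine isPath_append' (hpath _ _ _) p234 (fun y hy1 hy2 => ?_)
    simp only [Walk.mem_support_append_iff] at hy2
    rcases hy2 with hy2 | hy2 | hy2
    · obtain ⟨c1, c2⟩ := hdisj _ _ _ _ h1 h2 E12 y hy1 hy2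
      exact pickJ f c1 c2 A01 A02
    · obtain ⟨c1, c2⟩ := hdisj _ _ _ _ h1 h3 E13 y hy1 hy2
      exact (pickF f c1 c2 A02 A03 A12 A13).elim
    · obtain ⟨c1, c2⟩ := hdisj _ _ _ _ h1 h4 E14 y hy1 hy2
      exact (pickF f c1 c2 A03 A04 A13 A14).elim
  have halfpath : (Walk.cons hadj.symm Walk.nil).IsPath := by
    rw [Walk.isPath_def]
    simp [hxa0]
  have pA : A.IsPath := by
    rw [hA]
    refine isPath_append' halfpath p1234 (fun y hy1 hy2 => ?_)
    simp only [Walk.support_cons, Walk.support_nil, List.mem_cons, List.not_mem_nil,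
      or_false] at hy1
    rcases hy1 with rfl | rfl
    · simp only [Walk.mem_support_append_iff] at hy2
      rcases hy2 with hy2 | hy2 | hy2 | hy2
      · obtain ⟨c1, -⟩ := hdisj a0 b0 _ _ hA0 h1 E01 y hxsup hy2
        rcases c1 with hc | hc
        exacts [(hxa0 hc).elim, (hxb0 hc).elim]
      · obtain ⟨c1, -⟩ := hdisj a0 b0 _ _ hA0 h2 E02 y hxsup hy2
        rcases c1 with hc | hc
        exacts [(hxa0 hc).elim, (hxb0 hc).elim]
      · obtain ⟨c1, -⟩ := hdisj a0 b0 _ _ hA0 h3 E03 y hxsup hy2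
        rcases c1 with hc | hc
        exacts [(hxa0 hc).elim, (hxb0 hc).elim]
      · obtain ⟨c1, -⟩ := hdisj a0 b0 _ _ hA0 h4 E04 y hxsup hy2
        rcases c1 with hc | hc
        exacts [(hxa0 hc).elim, (hxb0 hc).elim]
    · rfl
  -- B is a path
  have q34 : ((P b2 b3 g3).append (P b3 b4 g4)).IsPath := by
    refine isPath_append' (hpath _ _ _) (hpath _ _ _) (fun y hy1 hy2 => ?_)
    obtain ⟨c1, c2⟩ := hdisj _ _ _ _ g3 g4 E78 y hy1 hy2
    exact pickJ f c1 c2 B23 B24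
  have q234 : ((P b1 b2 g2).append ((P b2 b3 g3).append (P b3 b4 g4))).IsPath := by
    refine isPath_append' (hpath _ _ _) q34 (fun y hy1 hy2 => ?_)
    rw [Walk.mem_support_append_iff] at hy2
    rcases hy2 with hy2 | hy2
    · obtain ⟨c1, c2⟩ := hdisj _ _ _ _ g2 g3 E67 y hy1 hy2
      exact pickJ f c1 c2 B12 B13
    · obtain ⟨c1, c2⟩ := hdisj _ _ _ _ g2 g4 E68 y hy1 hy2
      exact (pickF f c1 c2 B13 B14 B23 B24).elim
  have q1234 : ((P b0 b1 g1).append ((P b1 b2 g2).append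
      ((P b2 b3 g3).append (P b3 b4 g4)))).IsPath := by
    refine isPath_append' (hpath _ _ _) q234 (fun y hy1 hy2 => ?_)
    simp only [Walk.mem_support_append_iff] at hy2
    rcases hy2 with hy2 | hy2 | hy2
    · obtain ⟨c1, c2⟩ := hdisj _ _ _ _ g1 g2 E56 y hy1 hy2
      exact pickJ f c1 c2 B01 B02
    · obtain ⟨c1, c2⟩ := hdisj _ _ _ _ g1 g3 E57 y hy1 hy2
      exact (pickF f c1 c2 B02 B03 B12 B13).elim
    · obtain ⟨c1, c2⟩ := hdisj _ _ _ _ g1 g4 E58 y hy1 hy2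
      exact (pickF f c1 c2 B03 B04 B13 B14).elim
  have pB : B.IsPath := by
    rw [hB]
    refine isPath_append' hw'path q1234 (fun y hy1 hy2 => ?_)
    simp only [Walk.mem_support_append_iff] at hy2
    rcases hy2 with hy2 | hy2 | hy2 | hy2
    · obtain ⟨c1, c2⟩ := hdisj a0 b0 _ _ hA0 g1 E05 y (hw'sub y hy1) hy2
      rcases c1 with rfl | rfl
      · exact absurd hy1 ha0w'
      · rfl
    · obtain ⟨c1, c2⟩ := hdisj a0 b0 _ _ hA0 g2 E06 y (hw'sub y hy1) hy2
      rcases c1 with rfl | rfl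
      · exact absurd hy1 ha0w'
      · rcases c2 with hc | hc
        exacts [absurd (f.injective hc) B01, absurd (f.injective hc) B02]
    · obtain ⟨c1, c2⟩ := hdisj a0 b0 _ _ hA0 g3 E07 y (hw'sub y hy1) hy2
      rcases c1 with rfl | rfl
      · exact absurd hy1 ha0w'
      · rcases c2 with hc | hc
        exacts [absurd (f.injective hc) B02, absurd (f.injective hc) B03]
    · obtain ⟨c1, c2⟩ := hdisj a0 b0 _ _ hA0 g4 E08 y (hw'sub y hy1) hy2
      rcases c1 with rfl | rfl
      · exact absurd hy1 ha0w'
      · rcases c2 with hc | hc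
        exacts [absurd (f.injective hc) B03, absurd (f.injective hc) B04]
  refine ⟨[⟨x, f a4, A⟩, ⟨x, f b4, B⟩], ⟨?_, ?_, ?_⟩, rfl⟩
  · intro p hp
    simp only [List.mem_cons, List.not_mem_nil, or_false] at hp
    rcases hp with rfl | rfl
    · exact pA
    · exact pB
  · intro e
    constructor
    · intro he
      obtain ⟨c, d, hcd, hecd⟩ := (hedge e).mp he
      have h9 := hedges c d hcd
      simp only [List.mem_cons, List.not_mem_nil, or_false] at h9
      rcases h9 with h9 | h9 | h9 | h9 | h9 | h9 | h9 | h9 | h9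
      · have he' := hPmem hcd hA0 h9 e hecd
        rw [hw, Walk.edges_cons] at he'
        rcases List.mem_cons.mp he' with rfl | he''
        · exact ⟨⟨x, f a4, A⟩, List.mem_cons_self, (eAmem _).mpr (Or.inl Sym2.eq_swap)⟩
        · exact ⟨⟨x, f b4, B⟩, List.mem_cons_of_mem _ (List.mem_cons_self),
            (eBmem _).mpr (Or.inl he'')⟩
      · exact ⟨⟨x, f a4, A⟩, List.mem_cons_self,
          (eAmem _).mpr (Or.inr (Or.inl (hPmem hcd h1 h9 e hecd)))⟩
      · exact ⟨⟨x, f a4, A⟩, List.mem_cons_self,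
          (eAmem _).mpr (Or.inr (Or.inr (Or.inl (hPmem hcd h2 h9 e hecd))))⟩
      · exact ⟨⟨x, f a4, A⟩, List.mem_cons_self,
          (eAmem _).mpr (Or.inr (Or.inr (Or.inr (Or.inl (hPmem hcd h3 h9 e hecd)))))⟩
      · exact ⟨⟨x, f a4, A⟩, List.mem_cons_self,
          (eAmem _).mpr (Or.inr (Or.inr (Or.inr (Or.inr (hPmem hcd h4 h9 e hecd)))))⟩
      · exact ⟨⟨x, f b4, B⟩, List.mem_cons_of_mem _ (List.mem_cons_self),
          (eBmem _).mpr (Or.inr (Or.inl (hPmem hcd g1 h9 e hecd)))⟩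
      · exact ⟨⟨x, f b4, B⟩, List.mem_cons_of_mem _ (List.mem_cons_self),
          (eBmem _).mpr (Or.inr (Or.inr (Or.inl (hPmem hcd g2 h9 e hecd))))⟩
      · exact ⟨⟨x, f b4, B⟩, List.mem_cons_of_mem _ (List.mem_cons_self),
          (eBmem _).mpr (Or.inr (Or.inr (Or.inr (Or.inl (hPmem hcd g3 h9 e hecd)))))⟩
      · exact ⟨⟨x, f b4, B⟩, List.mem_cons_of_mem _ (List.mem_cons_self),
          (eBmem _).mpr (Or.inr (Or.inr (Or.inr (Or.inr (hPmem hcd g4 h9 e hecd)))))⟩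
    · rintro ⟨p, hp, hep⟩
      simp only [List.mem_cons, List.not_mem_nil, or_false] at hp
      rcases hp with rfl | rfl
      · exact Walk.edges_subset_edgeSet _ hep
      · exact Walk.edges_subset_edgeSet _ hep
  · refine List.Pairwise.cons ?_ (List.pairwise_singleton _ _)
    intro q hq
    simp only [List.mem_cons, List.not_mem_nil, or_false] at hq
    subst hq
    intro e heA heB
    rw [eAmem] at heA
    rw [eBmem] at heB
    rcases heA with rfl | hA1 | hA2 | hA3 | hA4
    · rcases heB with hB0 | hB1 | hB2 | hB3 | hB4
      · have hnd : (P a0 b0 hA0).edges.Nodup := (hpath a0 b0 hA0).isTrail.edges_nodup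
        rw [hw, Walk.edges_cons] at hnd
        rw [Sym2.eq_swap] at hB0
        exact (List.nodup_cons.mp hnd).1 hB0
      · exact hedisj a0 b0 b0 b1 hA0 g1 E05 _ hxw2 hB1
      · exact hedisj a0 b0 b1 b2 hA0 g2 E06 _ hxw2 hB2
      · exact hedisj a0 b0 b2 b3 hA0 g3 E07 _ hxw2 hB3
      · exact hedisj a0 b0 b3 b4 hA0 g4 E08 _ hxw2 hB4
    · rcases heB with hB0 | hB1 | hB2 | hB3 | hB4
      · exact hedisj a0 a1 a0 b0 h1 hA0 (Ne.symm E01) e hA1 (hw'w e hB0)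
      · exact hedisj a0 a1 b0 b1 h1 g1 E15 e hA1 hB1
      · exact hedisj a0 a1 b1 b2 h1 g2 E16 e hA1 hB2
      · exact hedisj a0 a1 b2 b3 h1 g3 E17 e hA1 hB3
      · exact hedisj a0 a1 b3 b4 h1 g4 E18 e hA1 hB4
    · rcases heB with hB0 | hB1 | hB2 | hB3 | hB4
      · exact hedisj a1 a2 a0 b0 h2 hA0 (Ne.symm E02) e hA2 (hw'w e hB0)
      · exact hedisj a1 a2 b0 b1 h2 g1 E25 e hA2 hB1
      · exact hedisj a1 a2 b1 b2 h2 g2 E26 e hA2 hB2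
      · exact hedisj a1 a2 b2 b3 h2 g3 E27 e hA2 hB3
      · exact hedisj a1 a2 b3 b4 h2 g4 E28 e hA2 hB4
    · rcases heB with hB0 | hB1 | hB2 | hB3 | hB4
      · exact hedisj a2 a3 a0 b0 h3 hA0 (Ne.symm E03) e hA3 (hw'w e hB0)
      · exact hedisj a2 a3 b0 b1 h3 g1 E35 e hA3 hB1
      · exact hedisj a2 a3 b1 b2 h3 g2 E36 e hA3 hB2
      · exact hedisj a2 a3 b2 b3 h3 g3 E37 e hA3 hB3
      · exact hedisj a2 a3 b3 b4 h3 g4 E38 e hA3 hB4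
    · rcases heB with hB0 | hB1 | hB2 | hB3 | hB4
      · exact hedisj a3 a4 a0 b0 h4 hA0 (Ne.symm E04) e hA4 (hw'w e hB0)
      · exact hedisj a3 a4 b0 b1 h4 g1 E45 e hA4 hB1
      · exact hedisj a3 a4 b1 b2 h4 g2 E46 e hA4 hB2
      · exact hedisj a3 a4 b2 b3 h4 g3 E47 e hA4 hB3
      · exact hedisj a3 a4 b3 b4 h4 g4 E48 e hA4 hB4
lemma path_start_unique_edge {V : Type} {G : SimpleGraph V} {u v : V} (p : G.Walk u v) :
    p.IsPath → ∀ e e' : Sym2 V, e ∈ p.edges → e' ∈ p.edges → u ∈ e → u ∈ e' → e = e' := by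
  induction p with
  | nil => intro _ e e' he; simp at he
  | cons hadj q ih =>
    intro hp e e' he he' hu hu'
    rw [SimpleGraph.Walk.cons_isPath_iff] at hp
    rw [SimpleGraph.Walk.edges_cons, List.mem_cons] at he he'
    have key : ∀ d : Sym2 V, d ∈ q.edges → _root_.id (·  ∈ d) _ → False := fun d hd hud =>
      hp.2 (mem_support_of_mem_edges' q hd hud)
    rcases he with rfl | he
    · rcases he' with rfl | he'
      · rfl
      · exact (key e' he' hu').elim
    · exact (key e he hu).elim

lemma path_three_edges {V : Type} {G : SimpleGraph V} {u v : V} (p : G.Walk u v) :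
    p.IsPath → ∀ (t : V) (e1 e2 e3 : Sym2 V), e1 ∈ p.edges → e2 ∈ p.edges → e3 ∈ p.edges →
      t ∈ e1 → t ∈ e2 → t ∈ e3 → e1 = e2 ∨ e1 = e3 ∨ e2 = e3 := by
  induction p with
  | nil => intro _ t e1 e2 e3 h1; simp at h1
  | @cons u y w hadj q ih =>
    intro hp t e1 e2 e3 h1 h2 h3 m1 m2 m3
    rw [SimpleGraph.Walk.cons_isPath_iff] at hp
    rw [SimpleGraph.Walk.edges_cons, List.mem_cons] at h1 h2 h3
    have hty : ∀ d : Sym2 V, d ∈ q.edges → t ∈ d → t ∈ s(u,y) → t = y := by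
      intro d hd htd hts
      rcases Sym2.mem_iff.mp hts with rfl | rfl
      · exact absurd (mem_support_of_mem_edges' q hd htd) hp.2
      · rfl
    rcases h1 with rfl | h1 <;> rcases h2 with rfl | h2 <;> rcases h3 with rfl | h3
    · exact Or.inl rfl
    · exact Or.inl rfl
    · exact Or.inr (Or.inl rfl)
    · have ht := hty e2 h2 m2 m1
      exact Or.inr (Or.inr (path_start_unique_edge q hp.1 e2 e3 h2 h3 (ht ▸ m2) (ht ▸ m3)))
    · exact Or.inr (Or.inr rfl)
    · have ht := hty e1 h1 m1 m2
      exact Or.inr (Or.inl (path_start_unique_edge q hp.1 e1 e3 h1 h3 (ht ▸ m1) (ht ▸ m3)))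
    · have ht := hty e1 h1 m1 m3
      exact Or.inl (path_start_unique_edge q hp.1 e1 e2 h1 h2 (ht ▸ m1) (ht ▸ m2))
    · exact ih hp.1 t e1 e2 e3 h1 h2 h3 m1 m2 m3

lemma lower_bound {V : Type} (G : SimpleGraph V) (f : Fin 5 ↪ V)
    (P : ∀ a b : Fin 5, K5m.Adj a b → G.Walk (f a) (f b))
    (hsub : IsSubdivisionOf G K5m f P) :
    ∀ D, IsPathDecomp G D → 2 ≤ D.length := by
  obtain ⟨hpath, hrev, hedge, hbranch, hdisj, -⟩ := hsub
  have mk : ∀ (i : Fin 5) (h : K5m.Adj 2 i), ∃ y, G.Adj (f 2) y ∧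
      s(f 2, y) ∈ (P 2 i h).edges ∧ y ∈ (P 2 i h).support := by
    intro i h
    obtain ⟨y, hadj, q, hq⟩ := SimpleGraph.Walk.exists_eq_cons_of_ne (f.injective.ne h.ne) (P 2 i h)
    refine ⟨y, hadj, ?_, ?_⟩
    · rw [hq, SimpleGraph.Walk.edges_cons]; exact List.mem_cons_self
    · rw [hq, SimpleGraph.Walk.support_cons]
      exact List.mem_cons_of_mem _ q.start_mem_support
  obtain ⟨y0, hy0, he0, hs0⟩ := mk 0 (by decide)
  obtain ⟨y1, hy1, he1, hs1⟩ := mk 1 (by decide)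
  obtain ⟨y3, hy3, he3, hs3⟩ := mk 3 (by decide)
  have hdist : ∀ {i j : Fin 5} (hi : K5m.Adj 2 i) (hj : K5m.Adj 2 j) (yi yj : V), i ≠ j →
      G.Adj (f 2) yi → yi ∈ (P 2 i hi).support → G.Adj (f 2) yj → yj ∈ (P 2 j hj).support →
      s(f 2, yi) ≠ s(f 2, yj) := by
    intro i j hi hj yi yj hij ai si aj sj hecon
    have hyy : yi = yj := by
      rcases Sym2.eq_iff.mp hecon with ⟨-, h⟩ | ⟨hc1, hc2⟩
      · exact h
      · exact absurd hc1 aj.ne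
    subst hyy
    have hne : s((2:Fin 5), i) ≠ s(2, j) := by
      intro hcon
      rcases Sym2.eq_iff.mp hcon with ⟨-, h⟩ | ⟨hc1, hc2⟩
      · exact hij h
      · exact hi.ne hc2.symm
    obtain ⟨c1, c2⟩ := hdisj 2 i 2 j hi hj hne yi si sj
    rcases c1 with h | h
    · exact ai.ne' h
    · rcases c2 with h' | h'
      · exact hi.ne (f.injective (h.symm.trans h')).symm
      · exact hij (f.injective (h.symm.trans h'))
  have d01 := hdist _ _ y0 y1 (by decide) hy0 hs0 hy1 hs1
  have d03 := hdist _ _ y0 y3 (by decide) hy0 hs0 hy3 hs3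
  have d13 := hdist _ _ y1 y3 (by decide) hy1 hs1 hy3 hs3
  intro D hD
  obtain ⟨hDpath, hDcov, -⟩ := hD
  rcases D with - | ⟨p, D'⟩
  · exfalso
    obtain ⟨p, hp, -⟩ := (hDcov _).mp (SimpleGraph.Walk.edges_subset_edgeSet _ he0)
    exact List.not_mem_nil hp
  rcases D' with - | ⟨q, D''⟩
  · exfalso
    have getp : ∀ (e : Sym2 V), e ∈ G.edgeSet → e ∈ p.2.2.edges := by
      intro e he
      obtain ⟨p', hp', h'⟩ := (hDcov e).mp he
      simp only [List.mem_cons, List.not_mem_nil, or_false] at hp'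
      subst hp'
      exact h'
    have hedge0 := getp _ (SimpleGraph.Walk.edges_subset_edgeSet _ he0)
    have hedge1 := getp _ (SimpleGraph.Walk.edges_subset_edgeSet _ he1)
    have hedge3 := getp _ (SimpleGraph.Walk.edges_subset_edgeSet _ he3)
    have h3e := path_three_edges p.2.2 (hDpath p (List.mem_cons_self)) (f 2) _ _ _
      hedge0 hedge1 hedge3 (Sym2.mem_mk_left _ _) (Sym2.mem_mk_left _ _) (Sym2.mem_mk_left _ _)
    rcases h3e with h | h | h
    exacts [d01 h, d03 h, d13 h]
  · simp only [List.length_cons]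
    omega
/-- Any proper subdivision of `K₅⁻` (some edge is subdivided at least once)
has path number 2. -/
theorem pn_eq_two_proper_subdivision_K5m {V : Type} (G : SimpleGraph V)
    (f : Fin 5 ↪ V) (P : ∀ a b : Fin 5, K5m.Adj a b → G.Walk (f a) (f b))
    (hsub : IsSubdivisionOf G K5m f P)
    (hproper : ∃ (a b : Fin 5) (h : K5m.Adj a b), 2 ≤ (P a b h).length) :
    (∃ D, IsPathDecomp G D ∧ D.length = 2) ∧
    (∀ D, IsPathDecomp G D → 2 ≤ D.length) := by
  refine ⟨?_, lower_bound G f P hsub⟩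
  obtain ⟨a, b, h, hlen⟩ := hproper
  revert h
  fin_cases a <;> fin_cases b <;> intro h hlen
  · exact absurd h (by decide)
  · exact absurd h (by decide)
  · exact construct G f P hsub 0 3 4 2 1 2 3 1 4 0 h hlen (by decide) (by decide) (by decide) (by decide) (by decide) (by decide) (by decide) (by decide) (by decide) (by decide) (by decide) (by decide)
  · exact construct G f P hsub 0 2 4 3 1 3 2 1 4 0 h hlen (by decide) (by decide) (by decide) (by decide) (by decide) (by decide) (by decide) (by decide) (by decide) (by decide) (by decide) (by decide)
  · exact construct G f P hsub 0 2 3 4 1 4 2 1 3 0 h hlen (by decide) (by decide) (by decide) (by decide) (by decide) (by decide) (by decide) (by decide) (by decide) (by decide) (by decide) (by decide)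
  · exact absurd h (by decide)
  · exact absurd h (by decide)
  · exact construct G f P hsub 1 3 4 2 0 2 3 0 4 1 h hlen (by decide) (by decide) (by decide) (by decide) (by decide) (by decide) (by decide) (by decide) (by decide) (by decide) (by decide) (by decide)
  · exact construct G f P hsub 1 2 4 3 0 3 2 0 4 1 h hlen (by decide) (by decide) (by decide) (by decide) (by decide) (by decide) (by decide) (by decide) (by decide) (by decide) (by decide) (by decide)
  · exact construct G f P hsub 1 2 3 4 0 4 2 0 3 1 h hlen (by decide) (by decide) (by decide) (by decide) (by decide) (by decide) (by decide) (by decide) (by decide) (by decide) (by decide) (by decide)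
  · exact construct G f P hsub 2 3 1 4 0 0 3 4 2 1 h hlen (by decide) (by decide) (by decide) (by decide) (by decide) (by decide) (by decide) (by decide) (by decide) (by decide) (by decide) (by decide)
  · exact construct G f P hsub 2 3 0 4 1 1 3 4 2 0 h hlen (by decide) (by decide) (by decide) (by decide) (by decide) (by decide) (by decide) (by decide) (by decide) (by decide) (by decide) (by decide)
  · exact absurd h (by decide)
  · exact construct G f P hsub 2 0 3 4 1 3 1 2 4 0 h hlen (by decide) (by decide) (by decide) (by decide) (by decide) (by decide) (by decide) (by decide) (by decide) (by decide) (by decide) (by decide)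
  · exact construct G f P hsub 2 0 4 3 1 4 1 2 3 0 h hlen (by decide) (by decide) (by decide) (by decide) (by decide) (by decide) (by decide) (by decide) (by decide) (by decide) (by decide) (by decide)
  · exact construct G f P hsub 3 2 1 4 0 0 2 4 3 1 h hlen (by decide) (by decide) (by decide) (by decide) (by decide) (by decide) (by decide) (by decide) (by decide) (by decide) (by decide) (by decide)
  · exact construct G f P hsub 3 2 0 4 1 1 2 4 3 0 h hlen (by decide) (by decide) (by decide) (by decide) (by decide) (by decide) (by decide) (by decide) (by decide) (by decide) (by decide) (by decide)
  · exact construct G f P hsub 3 1 2 4 0 2 0 3 4 1 h hlen (by decide) (by decide) (by decide) (by decide) (by decide) (by decide) (by decide) (by decide) (by decide) (by decide) (by decide) (by decide)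
  · exact absurd h (by decide)
  · exact construct G f P hsub 3 0 4 2 1 4 1 3 2 0 h hlen (by decide) (by decide) (by decide) (by decide) (by decide) (by decide) (by decide) (by decide) (by decide) (by decide) (by decide) (by decide)
  · exact construct G f P hsub 4 2 1 3 0 0 2 3 4 1 h hlen (by decide) (by decide) (by decide) (by decide) (by decide) (by decide) (by decide) (by decide) (by decide) (by decide) (by decide) (by decide)
  · exact construct G f P hsub 4 2 0 3 1 1 2 3 4 0 h hlen (by decide) (by decide) (by decide) (by decide) (by decide) (by decide) (by decide) (by decide) (by decide) (by decide) (by decide) (by decide)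
  · exact construct G f P hsub 4 1 2 3 0 2 0 4 3 1 h hlen (by decide) (by decide) (by decide) (by decide) (by decide) (by decide) (by decide) (by decide) (by decide) (by decide) (by decide) (by decide)
  · exact construct G f P hsub 4 1 3 2 0 3 0 4 2 1 h hlen (by decide) (by decide) (by decide) (by decide) (by decide) (by decide) (by decide) (by decide) (by decide) (by decide) (by decide) (by decide)
  · exact absurd h (by decide)
end

section
/- If G is a k-tree with at least k+2 vertices, then no two terminal vertices of G are adjacent. -/
/-- `G` is a `k`-tree: either `G ≃ K_k`, or `G` has a vertex `v` whose neighborhood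
induces `K_k` such that `G - v` is a `k`-tree. -/
inductive IsKTree (k : ℕ) : {V : Type} → SimpleGraph V → Prop
  | base {V : Type} (G : SimpleGraph V) (h : Nonempty (G ≃g SimpleGraph.completeGraph (Fin k))) :
      IsKTree k G
  | extend {V : Type} (G : SimpleGraph V) (v : V)
      (hnb : Nonempty ((G.induce (G.neighborSet v)) ≃g SimpleGraph.completeGraph (Fin k)))
      (hrec : IsKTree k (G.induce {u : V | u ≠ v})) : IsKTree k G

/-- A terminal vertex of a `k`-tree: a vertex of degree `k` (or any vertex if `G ≃ K_k`). -/
def IsTerminal (k : ℕ) {V : Type} (G : SimpleGraph V) (v : V) : Prop :=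
  (G.neighborSet v).ncard = k ∨ Nonempty (G ≃g SimpleGraph.completeGraph (Fin k))

lemma iso_card {V : Type} {G : SimpleGraph V} {k : ℕ}
    (h : Nonempty (G ≃g SimpleGraph.completeGraph (Fin k))) : Nat.card V = k := by
  obtain ⟨f⟩ := h
  simpa using Nat.card_congr f.toEquiv

lemma nbhd_ncard {V : Type} {G : SimpleGraph V} {v : V} {k : ℕ}
    (h : Nonempty ((G.induce (G.neighborSet v)) ≃g SimpleGraph.completeGraph (Fin k))) :
    (G.neighborSet v).ncard = k := by
  obtain ⟨f⟩ := h
  rw [← Nat.card_coe_set_eq]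
  simpa using Nat.card_congr f.toEquiv

lemma induce_nbhd {V : Type} (G : SimpleGraph V) (s : Set V) (a : s) :
    (G.induce s).neighborSet a = Subtype.val ⁻¹' (G.neighborSet ↑a) := by
  ext b
  simp [SimpleGraph.neighborSet]

lemma induce_nbhd_ncard {V : Type} (G : SimpleGraph V) (s : Set V) (a : s) :
    ((G.induce s).neighborSet a).ncard = (G.neighborSet ↑a ∩ s).ncard := by
  rw [induce_nbhd, ← Set.ncard_image_of_injective _ (Subtype.val_injective (p := (· ∈ s))),
    Set.image_preimage_eq_inter_range, Subtype.range_coe]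

lemma ncard_ne {V : Type} [Finite V] (w : V) : ({u : V | u ≠ w}).ncard = Nat.card V - 1 := by
  have : {u : V | u ≠ w} = Set.univ \ {w} := by ext u; simp
  rw [this, Set.ncard_diff (by simp), Set.ncard_univ, Set.ncard_singleton]

lemma nbhd_subset_ne {V : Type} (G : SimpleGraph V) (w : V) :
    G.neighborSet w ⊆ {u : V | u ≠ w} := by
  intro u hu
  exact fun h => G.irrefl (h ▸ hu)

lemma complete_of_card_eq {k : ℕ} {V : Type} [Finite V] {G : SimpleGraph V}
    (hG : IsKTree k G) (hcard : Nat.card V = k) : ∀ a b : V, a ≠ b → G.Adj a b := by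
  cases hG with
  | base G h =>
    obtain ⟨f⟩ := h
    intro a b hab
    rw [← f.map_adj_iff]
    simpa using fun h => hab (f.toEquiv.injective h)
  | extend G w hnb hrec =>
    intro a b hab
    exfalso
    have hw : (G.neighborSet w).ncard = k := nbhd_ncard hnb
    have hsub := Set.ncard_le_ncard (nbhd_subset_ne G w) (Set.toFinite _)
    rw [hw, ncard_ne, hcard] at hsub
    have hk : k = 0 := by omega
    have h0 : Nat.card V = 0 := by omega
    rcases Nat.card_eq_zero.mp h0 with h | h
    · exact h.elim w
    · exact not_finite_iff_infinite.mpr h ‹Finite V›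


lemma ktree_min_degree {k : ℕ} : ∀ {V : Type} (G : SimpleGraph V), IsKTree k G →
    Finite V → k + 1 ≤ Nat.card V → ∀ v, k ≤ (G.neighborSet v).ncard := by
  intro V₀ G₀ hG
  induction hG with
  | @base V G h =>
    intro hfin hcard v
    exact absurd (iso_card h) (by omega)
  | @extend V G w hnb hrec ih =>
    intro hfin hcard v
    have := hfin
    have hw : (G.neighborSet w).ncard = k := nbhd_ncard hnb
    by_cases hvw : v = w
    · subst hvw; omega
    · have hscard : Nat.card ↥{u | u ≠ w} = Nat.card V - 1 := by
        rw [Nat.card_coe_set_eq, ncard_ne]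
      rcases Nat.lt_or_ge (Nat.card V) (k + 2) with hlt | hge
      · -- Nat.card V = k + 1 : G is complete
        have hV : Nat.card V = k + 1 := by omega
        have hNw : G.neighborSet w = {u | u ≠ w} := by
          apply Set.eq_of_subset_of_ncard_le (nbhd_subset_ne G w) _ (Set.toFinite _)
          rw [hw, ncard_ne]; omega
        have hcompl : ∀ a b, a ≠ b → G.Adj a b := by
          intro a b hab
          by_cases haw : a = w
          · subst haw
            have : b ∈ G.neighborSet a := by rw [hNw]; exact fun h => hab h.symm
            exact this
          · by_cases hbw : b = w
            · subst hbw
              have : a ∈ G.neighborSet b := by rw [hNw]; exact haw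
              exact this.symm
            · have := complete_of_card_eq hrec (by omega)
                ⟨a, haw⟩ ⟨b, hbw⟩ (by simpa using hab)
              simpa using this
        have hNv : G.neighborSet v = {u : V | u ≠ v} := by
          ext u
          constructor
          · exact fun h hh => G.irrefl (hh ▸ h)
          · exact fun h => (hcompl u v h).symm
        rw [hNv, ncard_ne]; omega
      · have hkey := ih inferInstance (by omega) ⟨v, hvw⟩
        rw [induce_nbhd_ncard] at hkey
        exact hkey.trans (Set.ncard_le_ncard Set.inter_subset_left (Set.toFinite _))


lemma ktree_aux {k : ℕ} : ∀ {V : Type} (G : SimpleGraph V), IsKTree k G →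
    Finite V → k + 2 ≤ Nat.card V → ∀ u v, (G.neighborSet u).ncard = k →
    (G.neighborSet v).ncard = k → u ≠ v → ¬ G.Adj u v := by
  intro V₀ G₀ hG
  induction hG with
  | @base V G h =>
    intro hfin hcard
    exact absurd (iso_card h) (by omega)
  | @extend V G w hnb hrec ih =>
    intro hfin hcard u v hu hv huv hadj
    have := hfin
    have hk1 : 1 ≤ k := by
      rw [← hu]
      exact (Set.ncard_pos (Set.toFinite _)).mpr ⟨v, hadj⟩
    have hscard : Nat.card ↥{u | u ≠ w} = Nat.card V - 1 := by
      rw [Nat.card_coe_set_eq, ncard_ne]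
    have claim : ∀ x, x ≠ w → (G.neighborSet x).ncard = k → ¬ G.Adj x w := by
      intro x hxw hx hadjxw
      have hmin := ktree_min_degree _ hrec inferInstance (by omega) ⟨x, hxw⟩
      rw [induce_nbhd_ncard] at hmin
      have heq : G.neighborSet x ∩ {u | u ≠ w} = G.neighborSet x \ {w} := by
        ext y; simp [Set.mem_diff]
      rw [heq, Set.ncard_diff_singleton_of_mem (show w ∈ G.neighborSet x from hadjxw)
        , hx] at hmin
      omega
    by_cases huw : u = w
    · subst huw
      exact claim v (fun h => huv h.symm) hv hadj.symm
    · by_cases hvw : v = w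
      · subst hvw
        exact claim u huw hu hadj
      · have hnu : ¬ G.Adj u w := claim u huw hu
        have hnv : ¬ G.Adj v w := claim v hvw hv
        rcases Nat.lt_or_ge (Nat.card V) (k + 3) with hlt | hge
        · -- Nat.card V = k + 2
          have hNw : (G.neighborSet w).ncard = k := nbhd_ncard hnb
          have hsub : G.neighborSet w ⊆ {x | x ≠ w} \ {u, v} := by
            intro x hx
            refine ⟨nbhd_subset_ne G w hx, ?_⟩
            simp only [Set.mem_insert_iff, Set.mem_singleton_iff]
            rintro (rfl | rfl)
            · exact hnu hx.symm
            · exact hnv hx.symm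
          have hle := Set.ncard_le_ncard hsub (Set.toFinite _)
          have huvs : ({u, v} : Set V) ⊆ {x | x ≠ w} := by
            rintro x (rfl | rfl)
            · exact huw
            · exact hvw
          rw [hNw, Set.ncard_diff huvs (Set.toFinite _), ncard_ne,
            Set.ncard_pair huv] at hle
          omega
        · -- apply the induction hypothesis inside the induced subgraph
          have hdu : ((G.induce {x | x ≠ w}).neighborSet ⟨u, huw⟩).ncard = k := by
            rw [induce_nbhd_ncard]
            have : G.neighborSet u ∩ {x | x ≠ w} = G.neighborSet u := by
              apply Set.inter_eq_self_of_subset_left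
              intro y hy
              rintro rfl
              exact hnu hy
            rw [this, hu]
          have hdv : ((G.induce {x | x ≠ w}).neighborSet ⟨v, hvw⟩).ncard = k := by
            rw [induce_nbhd_ncard]
            have : G.neighborSet v ∩ {x | x ≠ w} = G.neighborSet v := by
              apply Set.inter_eq_self_of_subset_left
              intro y hy
              rintro rfl
              exact hnv hy
            rw [this, hv]
          exact ih inferInstance (by omega) ⟨u, huw⟩ ⟨v, hvw⟩ hdu hdv
            (by simpa using huv) (by simpa using hadj)

/-- In a `k`-tree with at least `k + 2` vertices, no two terminal vertices are adjacent. -/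
theorem kTree_terminals_nonadjacent {V : Type} [Fintype V] (k : ℕ) (G : SimpleGraph V)
    (hG : IsKTree k G) (hcard : k + 2 ≤ Fintype.card V)
    (u v : V) (hu : IsTerminal k G u) (hv : IsTerminal k G v) (huv : u ≠ v) :
    ¬ G.Adj u v := by
  have hcard' : k + 2 ≤ Nat.card V := by rw [Nat.card_eq_fintype_card]; exact hcard
  have hu' : (G.neighborSet u).ncard = k := by
    rcases hu with h | h
    · exact h
    · exact absurd (iso_card h) (by omega)
  have hv' : (G.neighborSet v).ncard = k := by
    rcases hv with h | h
    · exact h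
    · exact absurd (iso_card h) (by omega)
  exact ktree_aux G hG inferInstance hcard' u v hu' hv' huv
end

section
/- Let G be a graph that is the union of two paths P_1 and P_2 which are edge-disjoint, share the same pair of end-vertices x and y, and let S = (V(P_1) ∩ V(P_2)) \ {x,y}. Then G admits a decomposition into at most |S| + 1 edge-disjoint cycles. -/
open SimpleGraph Walk List Classical

theorem split_unique {α : Type*} {a : α} : ∀ {l₁ : List α} {m₁ : List α} {l₂ m₂ : List α},
    l₁ ++ a :: l₂ = m₁ ++ a :: m₂ → a ∉ l₁ → a ∉ m₁ → l₁ = m₁ ∧ l₂ = m₂ := by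
  intro l₁
  induction l₁ with
  | nil =>
    intro m₁ l₂ m₂ h h1 h2
    cases m₁ with
    | nil => simpa using h
    | cons b m =>
      simp only [List.nil_append, List.cons_append, List.cons.injEq] at h
      exact absurd (h.1 ▸ List.mem_cons_self) h2
  | cons b l ih =>
    intro m₁ l₂ m₂ h h1 h2
    cases m₁ with
    | nil =>
      simp only [List.nil_append, List.cons_append, List.cons.injEq] at h
      exact absurd (h.1.symm ▸ List.mem_cons_self) h1
    | cons c m =>
      simp only [List.cons_append, List.cons.injEq] at h
      obtain ⟨rfl, h⟩ := h
      have := ih h (fun hh => h1 (List.mem_cons_of_mem _ hh)) (fun hh => h2 (List.mem_cons_of_mem _ hh))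
      exact ⟨by rw [this.1], this.2⟩

theorem auxDecomp {V : Type} (G : SimpleGraph V) : ∀ (n : ℕ) {x y : V}
    (P₁ P₂ : G.Walk x y), P₁.length ≤ n → P₁.IsPath → P₂.IsPath →
    (∀ e ∈ P₁.edges, e ∉ P₂.edges) →
    ∃ C : List (Σ v : V, G.Walk v v),
      (∀ c ∈ C, c.2.IsCycle) ∧
      (∀ e, (e ∈ P₁.edges ∨ e ∈ P₂.edges) ↔ ∃ c ∈ C, e ∈ c.2.edges) ∧
      C.Pairwise (fun c d => ∀ e, e ∈ c.2.edges → e ∉ d.2.edges) ∧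
      (x = y → C = []) ∧
      C.length ≤ {v | v ∈ P₁.support ∧ v ∈ P₂.support ∧ v ≠ x ∧ v ≠ y}.ncard + 1 := by
  intro n
  induction n with
  | zero =>
    intro x y P₁ P₂ hlen hP₁ hP₂ hdisj
    have hxy : x = y := by
      cases P₁ with
      | nil => rfl
      | cons h p => simp at hlen
    subst hxy
    have h1 : P₁ = Walk.nil := Walk.isPath_iff_eq_nil.mp hP₁
    have h2 : P₂ = Walk.nil := Walk.isPath_iff_eq_nil.mp hP₂
    subst h1; subst h2
    exact ⟨[], by simp, by simp, by simp, fun _ => rfl, by simp⟩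
  | succ n ih =>
    intro x y P₁ P₂ hlen hP₁ hP₂ hdisj
    by_cases hxy : x = y
    · subst hxy
      have h1 : P₁ = Walk.nil := Walk.isPath_iff_eq_nil.mp hP₁
      have h2 : P₂ = Walk.nil := Walk.isPath_iff_eq_nil.mp hP₂
      subst h1; subst h2
      exact ⟨[], by simp, by simp, by simp, fun _ => rfl, by simp⟩
    classical
    set t := P₁.support.tail with ht
    have hsupp₁ : P₁.support = x :: t := P₁.support_eq_cons
    have hnd₁ : P₁.support.Nodup := hP₁.support_nodup
    have hxt : x ∉ t := by
      rw [hsupp₁] at hnd₁; exact (List.nodup_cons.mp hnd₁).1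
    have hndt : t.Nodup := by rw [hsupp₁] at hnd₁; exact (List.nodup_cons.mp hnd₁).2
    set q : V → Bool := fun v => decide (v ∉ P₂.support) with hq
    have hyt : y ∈ t := by
      have := P₁.end_mem_support
      rw [hsupp₁, List.mem_cons] at this
      exact this.resolve_left (fun h => hxy h.symm)
    have hdw : t.dropWhile q ≠ [] := by
      intro h
      have : t.takeWhile q = t := by
        have := List.takeWhile_append_dropWhile (l := t) (p := q)
        rwa [h, List.append_nil] at this
      have hy' : y ∈ t.takeWhile q := by rw [this]; exact hyt
      have := List.mem_takeWhile_imp hy'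
      simp only [hq, decide_eq_true_eq] at this
      exact this P₂.end_mem_support
    set z := (t.dropWhile q).head hdw with hz
    have hzq : ¬ q z := by
      have := List.head_dropWhile_not q hdw
      simpa using this
    have hz2 : z ∈ P₂.support := by simpa [hq] using hzq
    have hzt : z ∈ t := by
      have : z ∈ t.dropWhile q := List.head_mem hdw
      exact List.dropWhile_subset _ this
    have hz1 : z ∈ P₁.support := by rw [hsupp₁]; exact List.mem_cons_of_mem _ hzt
    have hzx : z ≠ x := fun h => hxt (h ▸ hzt)
    have hsplit : t = t.takeWhile q ++ z :: (t.dropWhile q).tail := by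
      rw [hz, List.cons_head_tail hdw, List.takeWhile_append_dropWhile]
    have has : ∀ v ∈ t.takeWhile q, v ∉ P₂.support := by
      intro v hv
      have := List.mem_takeWhile_imp hv
      simpa [hq] using this
    have hzas : z ∉ t.takeWhile q := fun h => has z h hz2
    -- segments
    set Q₁ := P₁.takeUntil z hz1 with hQ₁
    set R₁ := P₁.dropUntil z hz1 with hR₁
    set Q₂ := P₂.takeUntil z hz2 with hQ₂
    set R₂ := P₂.dropUntil z hz2 with hR₂
    have hspec₁ : Q₁.append R₁ = P₁ := P₁.take_spec hz1
    have hspec₂ : Q₂.append R₂ = P₂ := P₂.take_spec hz2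
    have hQ₁p : Q₁.IsPath := hP₁.takeUntil hz1
    have hR₁p : R₁.IsPath := hP₁.dropUntil hz1
    have hQ₂p : Q₂.IsPath := hP₂.takeUntil hz2
    have hR₂p : R₂.IsPath := hP₂.dropUntil hz2
    -- support decomposition of P₁
    have hsuppApp₁ : P₁.support = Q₁.support ++ R₁.support.tail := by
      rw [← hspec₁, support_append]
    have htur : t = Q₁.support.tail ++ R₁.support.tail := by
      have : x :: t = x :: (Q₁.support.tail ++ R₁.support.tail) := by
        rw [← hsupp₁, hsuppApp₁, Q₁.support_eq_cons]; rfl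
      exact List.cons_injective.eq_iff.mp this |>.symm ▸ rfl
    -- structure of Q₁.support.tail
    have hQ₁nnil : Q₁.length ≠ 0 := fun h => hzx (Walk.eq_of_length_eq_zero h).symm
    have hu_ne : Q₁.support.tail ≠ [] := by
      intro h
      have hl := Q₁.length_support
      rw [Q₁.support_eq_cons, h] at hl
      simp at hl
      exact hQ₁nnil (Walk.nil_iff_length_eq.mp hl)
    have hS_eq : Q₁.support.dropLast ++ [z] = Q₁.support := by
      have h6 := List.dropLast_append_getLast (l := Q₁.support) (by simp)
      rwa [Q₁.getLast_support] at h6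
    have hu_eq : Q₁.support.tail = Q₁.support.tail.dropLast ++ [z] := by
      have h5 : (x :: Q₁.support.tail).dropLast ++ [z] = x :: Q₁.support.tail := by
        rw [← Q₁.support_eq_cons]; exact hS_eq
      cases htail : Q₁.support.tail with
      | nil => exact absurd htail hu_ne
      | cons b l =>
        rw [htail, List.dropLast_cons₂] at h5
        rw [List.cons_append] at h5
        exact (List.cons_injective.eq_iff.mp h5).symm
    have hndQ₁ : Q₁.support.Nodup := hQ₁p.support_nodup
    have hndQ₁t : Q₁.support.tail.Nodup := hndQ₁.tail
    have hzu' : z ∉ Q₁.support.tail.dropLast := by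
      rw [hu_eq] at hndQ₁t
      exact fun h => List.disjoint_of_nodup_append hndQ₁t h (List.mem_singleton_self z)
    have hteq : t.takeWhile q ++ z :: (t.dropWhile q).tail
        = Q₁.support.tail.dropLast ++ z :: R₁.support.tail := by
      rw [← hsplit, htur, hu_eq]; simp
    obtain ⟨hasu', hrd⟩ := split_unique hteq hzas hzu'
    -- so internal vertices of Q₁ avoid P₂
    have hu'P₂ : ∀ v ∈ Q₁.support.tail.dropLast, v ∉ P₂.support := by
      intro v hv; exact has v (hasu' ▸ hv)
    -- structure of Q₂.support.tail
    have hQ₂nnil : Q₂.length ≠ 0 := fun h => hzx (Walk.eq_of_length_eq_zero h).symm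
    have hw_ne : Q₂.support.tail ≠ [] := by
      intro h
      have hl := Q₂.length_support
      rw [Q₂.support_eq_cons, h] at hl
      simp at hl
      exact hQ₂nnil (Walk.nil_iff_length_eq.mp hl)
    have hS_eq₂ : Q₂.support.dropLast ++ [z] = Q₂.support := by
      have h6 := List.dropLast_append_getLast (l := Q₂.support) (by simp)
      rwa [Q₂.getLast_support] at h6
    have hw_eq : Q₂.support.tail = Q₂.support.tail.dropLast ++ [z] := by
      have h5 : (x :: Q₂.support.tail).dropLast ++ [z] = x :: Q₂.support.tail := by
        rw [← Q₂.support_eq_cons]; exact hS_eq₂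
      cases htail : Q₂.support.tail with
      | nil => exact absurd htail hw_ne
      | cons b l =>
        rw [htail, List.dropLast_cons₂] at h5
        rw [List.cons_append] at h5
        exact (List.cons_injective.eq_iff.mp h5).symm
    set w' := Q₂.support.tail.dropLast with hw'
    have hndQ₂ : Q₂.support.Nodup := hQ₂p.support_nodup
    have hndQ₂t : Q₂.support.tail.Nodup := hndQ₂.tail
    have hzw' : z ∉ w' := by
      rw [hw_eq] at hndQ₂t
      exact fun h => List.disjoint_of_nodup_append hndQ₂t h (List.mem_singleton_self z)
    have hxw' : x ∉ w' := by
      intro h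
      rw [Q₂.support_eq_cons] at hndQ₂
      exact (List.nodup_cons.mp hndQ₂).1 (List.mem_of_mem_dropLast h)
    have hw'P₂ : ∀ v ∈ w', v ∈ P₂.support := by
      intro v hv
      exact P₂.support_takeUntil_subset hz2
        (Q₂.support_eq_cons ▸ List.mem_cons_of_mem _ (List.mem_of_mem_dropLast hv))
    -- the cycle
    set c : G.Walk x x := Q₁.append Q₂.reverse with hc
    have hcycle : c.IsCycle := by
      rw [Walk.isCycle_def]
      refine ⟨?_, ?_, ?_⟩
      · -- trail
        rw [Walk.isTrail_def, hc, Walk.edges_append, Walk.edges_reverse, List.nodup_append]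
        refine ⟨hQ₁p.isTrail.edges_nodup, List.nodup_reverse.mpr hQ₂p.isTrail.edges_nodup, ?_⟩
        intro e he e' he' hee; subst hee
        rw [List.mem_reverse] at he'
        exact hdisj e (P₁.edges_takeUntil_subset hz1 he) (P₂.edges_takeUntil_subset hz2 he')
      · -- ne nil
        intro h
        have : c.length = 0 := by rw [h]; rfl
        rw [hc, Walk.length_append] at this
        exact hQ₁nnil (by omega)
      · -- support tail nodup
        have hct : c.support.tail = Q₁.support.tail ++ Q₂.reverse.support.tail := by
          rw [hc, tail_support_append]
        have hrevtail : Q₂.reverse.support.tail = w'.reverse ++ [x] := by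
          rw [support_reverse, Q₂.support_eq_cons, hw_eq]
          simp
        rw [hct, hrevtail, List.nodup_append]
        refine ⟨hndQ₁t, ?_, ?_⟩
        · have : (x :: w').Nodup := by
            rw [Q₂.support_eq_cons, hw_eq, ← List.cons_append] at hndQ₂
            exact (List.nodup_append.mp hndQ₂).1
          have := List.nodup_reverse.mpr this
          simpa using this
        · intro v hv v' hv' hvv; subst hvv
          have hv'' : v ∈ w' ∨ v = x := by
            rcases List.mem_append.mp hv' with h | h
            · exact Or.inl (List.mem_reverse.mp h)
            · exact Or.inr (List.mem_singleton.mp h)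
          rw [hu_eq, List.mem_append] at hv
          rcases hv with h | h
          · rcases hv'' with h' | h'
            · exact hu'P₂ v h (hw'P₂ v h')
            · exact hu'P₂ v h (h' ▸ P₂.start_mem_support)
          · rw [List.mem_singleton] at h
            subst h
            rcases hv'' with h' | h'
            · exact hzw' h'
            · exact hzx h'
    -- recursive call
    have hlenQR : Q₁.length + R₁.length = P₁.length := by
      have := congrArg Walk.length hspec₁
      rwa [Walk.length_append] at this
    have hlenR : R₁.length ≤ n := by omega
    have hdisjR : ∀ e ∈ R₁.edges, e ∉ R₂.edges := fun e he he' =>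
      hdisj e (P₁.edges_dropUntil_subset hz1 he) (P₂.edges_dropUntil_subset hz2 he')
    obtain ⟨C', hC1, hC2, hC3, hC4, hC5⟩ := ih R₁ R₂ hlenR hR₁p hR₂p hdisjR
    -- edge bookkeeping
    have hedges₁ : P₁.edges = Q₁.edges ++ R₁.edges := by rw [← hspec₁, Walk.edges_append]
    have hedges₂ : P₂.edges = Q₂.edges ++ R₂.edges := by rw [← hspec₂, Walk.edges_append]
    have hcE : ∀ e, e ∈ c.edges ↔ e ∈ Q₁.edges ∨ e ∈ Q₂.edges := by
      intro e
      rw [hc, Walk.edges_append, Walk.edges_reverse, List.mem_append, List.mem_reverse]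
    have hd11 : ∀ e ∈ Q₁.edges, e ∉ R₁.edges := by
      have := hP₁.isTrail.edges_nodup
      rw [hedges₁] at this
      exact fun e he => List.disjoint_of_nodup_append this he
    have hd22 : ∀ e ∈ Q₂.edges, e ∉ R₂.edges := by
      have := hP₂.isTrail.edges_nodup
      rw [hedges₂] at this
      exact fun e he => List.disjoint_of_nodup_append this he
    have hd12 : ∀ e ∈ Q₁.edges, e ∉ R₂.edges := fun e he he' =>
      hdisj e (P₁.edges_takeUntil_subset hz1 he) (P₂.edges_dropUntil_subset hz2 he')
    have hd21 : ∀ e ∈ Q₂.edges, e ∉ R₁.edges := fun e he he' =>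
      hdisj e (P₁.edges_dropUntil_subset hz1 he') (P₂.edges_takeUntil_subset hz2 he)
    have hC'R : ∀ (d : Σ v : V, G.Walk v v), d ∈ C' → ∀ e ∈ d.2.edges,
        e ∈ R₁.edges ∨ e ∈ R₂.edges := by
      intro d hd e he
      exact (hC2 e).mpr ⟨d, hd, he⟩
    refine ⟨⟨x, c⟩ :: C', ?_, ?_, ?_, ?_, ?_⟩
    · intro d hd
      rcases List.mem_cons.mp hd with h | h
      · rw [h]; exact hcycle
      · exact hC1 d h
    · intro e
      constructor
      · intro he
        rcases he with he | he
        · rw [hedges₁, List.mem_append] at he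
          rcases he with he | he
          · exact ⟨⟨x, c⟩, List.mem_cons_self, (hcE e).mpr (Or.inl he)⟩
          · obtain ⟨d, hd, hde⟩ := (hC2 e).mp (Or.inl he)
            exact ⟨d, List.mem_cons_of_mem _ hd, hde⟩
        · rw [hedges₂, List.mem_append] at he
          rcases he with he | he
          · exact ⟨⟨x, c⟩, List.mem_cons_self, (hcE e).mpr (Or.inr he)⟩
          · obtain ⟨d, hd, hde⟩ := (hC2 e).mp (Or.inr he)
            exact ⟨d, List.mem_cons_of_mem _ hd, hde⟩
      · rintro ⟨d, hd, hde⟩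
        rcases List.mem_cons.mp hd with h | h
        · rw [h] at hde
          rcases (hcE e).mp hde with he | he
          · exact Or.inl (P₁.edges_takeUntil_subset hz1 he)
          · exact Or.inr (P₂.edges_takeUntil_subset hz2 he)
        · rcases hC'R d h e hde with he | he
          · exact Or.inl (P₁.edges_dropUntil_subset hz1 he)
          · exact Or.inr (P₂.edges_dropUntil_subset hz2 he)
    · refine List.Pairwise.cons ?_ hC3
      intro d hd e he he'
      rcases (hcE e).mp he with hq1 | hq2
      · rcases hC'R d hd e he' with h | h
        · exact hd11 e hq1 h
        · exact hd12 e hq1 h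
      · rcases hC'R d hd e he' with h | h
        · exact hd21 e hq2 h
        · exact hd22 e hq2 h
    · intro h; exact absurd h hxy
    · -- cardinality
      by_cases hzy : z = y
      · have : C' = [] := hC4 hzy
        rw [this]
        simp only [List.length_cons, List.length_nil]
        omega
      · set S := {v | v ∈ P₁.support ∧ v ∈ P₂.support ∧ v ≠ x ∧ v ≠ y} with hS
        set S' := {v | v ∈ R₁.support ∧ v ∈ R₂.support ∧ v ≠ z ∧ v ≠ y} with hS'
        have hSfin : S.Finite := P₁.support.finite_toSet.subset (fun v hv => hv.1)
        have hS'fin : S'.Finite := R₁.support.finite_toSet.subset (fun v hv => hv.1)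
        have hzS' : z ∉ S' := fun h => h.2.2.1 rfl
        have hsub : insert z S' ⊆ S := by
          intro v hv
          rcases Set.mem_insert_iff.mp hv with rfl | hv
          · exact ⟨hz1, hz2, hzx, hzy⟩
          · refine ⟨P₁.support_dropUntil_subset hz1 hv.1,
              P₂.support_dropUntil_subset hz2 hv.2.1, ?_, hv.2.2.2⟩
            intro hvx
            have hv1 : v ∈ R₁.support := hv.1
            rw [R₁.support_eq_cons, List.mem_cons] at hv1
            rcases hv1 with h | h
            · exact hv.2.2.1 h
            · rw [← hrd] at h
              exact hxt (hvx ▸ (List.dropWhile_subset _ (List.mem_of_mem_tail h)))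
        have h1 : S'.ncard + 1 = (insert z S').ncard :=
          (Set.ncard_insert_of_notMem hzS' hS'fin).symm
        have h2 : (insert z S').ncard ≤ S.ncard := Set.ncard_le_ncard hsub hSfin
        simp only [List.length_cons]
        omega


/-- A cycle decomposition of `G`: a list of cycles of `G` whose edge sets are pairwise
disjoint and whose union is the edge set of `G`. -/
def IsCycleDecomp {V : Type} (G : SimpleGraph V)
    (C : List (Σ v : V, G.Walk v v)) : Prop :=
  (∀ c ∈ C, c.2.IsCycle) ∧
  (∀ e : Sym2 V, e ∈ G.edgeSet ↔ ∃ c ∈ C, e ∈ c.2.edges) ∧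
  C.Pairwise (fun c d => ∀ e, e ∈ c.2.edges → e ∉ d.2.edges)

/-- If `G` is the union of two edge-disjoint paths `P₁, P₂` with the same end-vertices
`x, y`, and `S` is the set of common internal vertices, then `G` decomposes into at most
`|S| + 1` cycles. -/
theorem cycleDecomp_two_paths {V : Type} (G : SimpleGraph V) {x y : V}
    (P₁ P₂ : G.Walk x y) (hP₁ : P₁.IsPath) (hP₂ : P₂.IsPath)
    (hdisj : ∀ e ∈ P₁.edges, e ∉ P₂.edges)
    (hcover : ∀ e, e ∈ G.edgeSet ↔ e ∈ P₁.edges ∨ e ∈ P₂.edges) :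
    ∃ C, IsCycleDecomp G C ∧
      C.length ≤ {v : V | v ∈ P₁.support ∧ v ∈ P₂.support ∧ v ≠ x ∧ v ≠ y}.ncard + 1 := by
  obtain ⟨C, h1, h2, h3, _, h5⟩ :=
    auxDecomp G P₁.length P₁ P₂ le_rfl hP₁ hP₂ hdisj
  exact ⟨C, ⟨h1, fun e => (hcover e).trans (h2 e), h3⟩, h5⟩
end
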